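/- arXiv:2111.05888 — 4 statements merged into one kernel-verified Lean document; each statement's English description precedes it below -/
import Mathlib

section
/- Let 𝐏 be a p-toral group with maximal torus 𝐓, and let T_p denote the subgroup of p-torsion elements of 𝐓. Then every p-discretization of 𝐏 contains T_p. -/
open scoped Pointwise
open CategoryTheory

noncomputable section

/-- The Prüfer `p`-group `ℤ/p^∞`, realized as the subgroup of the circle group
consisting of the elements of `p`-power order. -/
def PruferGroup (p : ℕ) : Subgroup Circle where
  carrier := {x | ∃ n : ℕ, x ^ p ^ n = 1}
  one_mem' := ⟨0, one_pow _⟩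
  mul_mem' := by
    rintro a b ⟨n, hn⟩ ⟨m, hm⟩
    refine ⟨n + m, ?_⟩
    rw [mul_pow, pow_add, pow_mul, hn, one_pow, one_mul, mul_comm (p ^ n), pow_mul, hm, one_pow]
  inv_mem' := by
    rintro a ⟨n, hn⟩
    exact ⟨n, by rw [inv_pow, hn, inv_one]⟩

/-- A group is a discrete `p`-torus of rank `r` if it is isomorphic to `(ℤ/p^∞)^r`. -/
def IsDiscretePTorusOfRank (p r : ℕ) (T : Type*) [Group T] : Prop :=
  Nonempty (T ≃* (Fin r → PruferGroup p))

/-- A group is discrete `p`-toral (of rank `r`, for some `r`) if it is an extension of a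
discrete `p`-torus of rank `r` by a finite `p`-group. -/
def IsDiscretePToral (p : ℕ) (P : Type*) [Group P] : Prop :=
  ∃ (r : ℕ) (T : Subgroup P) (hT : T.Normal),
    IsDiscretePTorusOfRank p r T ∧
    (letI := hT; Finite (P ⧸ T) ∧ IsPGroup p (P ⧸ T))

/-- A topological group is a (continuous) torus of rank `r` if it is isomorphic, as a
topological group, to `(S¹)^r`. -/
def IsTorusOfRank (r : ℕ) (T : Type*) [Group T] [TopologicalSpace T] : Prop :=
  ∃ e : T ≃* (Fin r → Circle), Continuous e ∧ Continuous e.symm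

/-- A topological group is `p`-toral of rank `r` if it is a compact group which is an
extension of a torus of rank `r` (its identity component, the maximal torus) by a
finite `p`-group. -/
def IsPToral (p : ℕ) (P : Type*) [Group P] [TopologicalSpace P] [IsTopologicalGroup P] : Prop :=
  CompactSpace P ∧
    ∃ r : ℕ, IsTorusOfRank r (Subgroup.connectedComponentOfOne P) ∧
      ∃ hN : (Subgroup.connectedComponentOfOne P).Normal,
        letI := hN
        Finite (P ⧸ Subgroup.connectedComponentOfOne P) ∧
          IsPGroup p (P ⧸ Subgroup.connectedComponentOfOne P)

/-- `P` is a maximal discrete `p`-toral subgroup of the subgroup `B`: it is a discrete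
`p`-toral subgroup contained in `B`, maximal among discrete `p`-toral subgroups of `B`. -/
def IsMaxDiscretePToralIn (p : ℕ) {G : Type*} [Group G] (P B : Subgroup G) : Prop :=
  P ≤ B ∧ IsDiscretePToral p P ∧
    ∀ Q : Subgroup G, Q ≤ B → IsDiscretePToral p Q → P ≤ Q → Q = P

/-- `P` is a maximal discrete `p`-toral subgroup of `G`. -/
def IsMaxDiscretePToral (p : ℕ) {G : Type*} [Group G] (P : Subgroup G) : Prop :=
  IsMaxDiscretePToralIn p P ⊤

/-- The image of a subgroup under the conjugation `c_g(x) = g⁻¹ x g`. -/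
def conjSubgroup {G : Type*} [Group G] (g : G) (P : Subgroup G) : Subgroup G :=
  Subgroup.map ((MulAut.conj g⁻¹).toMonoidHom) P


lemma myaux_pow_le {G : Type*} [Group G] {g : G} {p a b : ℕ} (h : g ^ p ^ a = 1) (hab : a ≤ b) :
    g ^ p ^ b = 1 := by
  rw [show b = a + (b - a) from (Nat.add_sub_cancel' hab).symm, pow_add, pow_mul, h, one_pow]

lemma myaux_pi_torsion {p r : ℕ} (f : Fin r → PruferGroup p) : ∃ N, f ^ p ^ N = 1 := by
  choose n hn using fun i => (f i).2
  refine ⟨Finset.univ.sup n, funext fun i => ?_⟩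
  have : ((f i : Circle)) ^ p ^ (Finset.univ.sup n) = 1 :=
    myaux_pow_le (hn i) (Finset.le_sup (Finset.mem_univ i))
  simp only [Pi.pow_apply, Pi.one_apply]
  ext
  simpa using congrArg (fun z : Circle => (z : ℂ)) this

lemma myaux_circle_exp_pow (a : ℝ) (n : ℕ) : Circle.exp a ^ n = Circle.exp (n * a) := by
  induction n with
  | zero => simp [Circle.exp_zero]
  | succ k ih =>
      rw [pow_succ, ih, ← Circle.exp_add]
      push_cast
      ring_nf

lemma myaux_prufer_div {p : ℕ} (hp : 0 < p) (k : ℕ) (x : PruferGroup p) :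
    ∃ y : PruferGroup p, y ^ p ^ k = x := by
  obtain ⟨n, hn⟩ := x.2
  have hpk : ((p : ℝ) ^ k) ≠ 0 := by positivity
  set y₀ : Circle := Circle.exp (Complex.arg (x : Circle) / (p ^ k : ℝ)) with hy₀
  have hyx : y₀ ^ p ^ k = (x : Circle) := by
    rw [hy₀, myaux_circle_exp_pow]
    push_cast
    rw [mul_div_cancel₀ _ hpk, Circle.exp_arg]
  refine ⟨⟨y₀, ⟨k + n, ?_⟩⟩, ?_⟩
  · rw [pow_add, pow_mul, hyx, hn]
  · ext
    simpa using congrArg (fun z : Circle => (z : ℂ)) hyx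

lemma myaux_pi_prufer_div {p r : ℕ} (hp : 0 < p) (k : ℕ) (f : Fin r → PruferGroup p) :
    ∃ g : Fin r → PruferGroup p, g ^ p ^ k = f := by
  choose g hg using fun i => myaux_prufer_div hp k (f i)
  exact ⟨g, funext fun i => by simpa using hg i⟩

def myauxPiSubgroupEquiv {ι : Type*} {G : ι → Type*} [∀ i, Group (G i)]
    (H : ∀ i, Subgroup (G i)) : (Subgroup.pi Set.univ H) ≃* (∀ i, H i) where
  toFun x i := ⟨x.1 i, x.2 i (Set.mem_univ i)⟩
  invFun f := ⟨fun i => f i, fun i _ => (f i).2⟩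
  left_inv x := rfl
  right_inv f := rfl
  map_mul' x y := rfl

/-- Let `𝐏` be a `p`-toral group with maximal torus `𝐓` (its identity
component) and let `T_p` be the subgroup of `p`-torsion elements of `𝐓`.  Then every
`p`-discretization of `𝐏` (i.e. every maximal discrete `p`-toral subgroup of `𝐏`)
contains `T_p`. -/
theorem pDiscretization_contains_torus_p_torsion (p : ℕ) [Fact p.Prime]
    (Pbold : Type*) [Group Pbold] [TopologicalSpace Pbold] [IsTopologicalGroup Pbold]
    (hPbold : IsPToral p Pbold)
    (P : Subgroup Pbold) (hP : IsMaxDiscretePToral p P) :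
    ∀ x ∈ Subgroup.connectedComponentOfOne Pbold, (∃ n : ℕ, x ^ p ^ n = 1) → x ∈ P := by
  have hp : 0 < p := (Fact.out : p.Prime).pos
  set TT : Subgroup Pbold := Subgroup.connectedComponentOfOne Pbold with hTT
  obtain ⟨-, r, ⟨e, -, -⟩, hN, hfin, hpgrp⟩ := hPbold
  -- the p-torsion subgroup of the torus
  set S : Subgroup (Fin r → Circle) := Subgroup.pi Set.univ (fun _ => PruferGroup p) with hS
  set A : Subgroup TT := S.comap (e : ↥TT →* (Fin r → Circle)) with hA
  set Tp : Subgroup Pbold := A.map TT.subtype with hTp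
  -- the equivalence Tp ≃* (Fin r → PruferGroup p)
  have hmapA : A.map (e : ↥TT →* (Fin r → Circle)) = S :=
    Subgroup.map_comap_eq_self_of_surjective e.surjective S
  have eTp : ↥Tp ≃* (Fin r → PruferGroup p) :=
    ((A.equivMapOfInjective TT.subtype TT.subtype_injective).symm.trans
      ((e.subgroupMap A).trans (MulEquiv.subgroupCongr hmapA))).trans
      (myauxPiSubgroupEquiv _)
  -- membership characterization of Tp
  have memTp : ∀ x : Pbold, x ∈ Tp ↔ x ∈ TT ∧ ∃ n : ℕ, x ^ p ^ n = 1 := by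
    intro x
    constructor
    · rintro ⟨t, ht, rfl⟩
      refine ⟨t.2, ?_⟩
      have ht' : ∀ i, (e t) i ∈ PruferGroup p := fun i => ht i (Set.mem_univ i)
      obtain ⟨N, hN'⟩ := myaux_pi_torsion (fun i => (⟨(e t) i, ht' i⟩ : PruferGroup p))
      refine ⟨N, ?_⟩
      have h1 : (e t) ^ p ^ N = 1 := by
        funext i
        have := congrFun hN' i
        simpa [Subtype.ext_iff] using this
      have h2 : t ^ p ^ N = 1 := by
        apply e.injective
        rw [map_pow, h1, map_one]
      calc (↑t : Pbold) ^ p ^ N = ↑(t ^ p ^ N) := rfl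
        _ = 1 := by rw [h2]; rfl
    · rintro ⟨hxTT, n, hxn⟩
      refine ⟨⟨x, hxTT⟩, ?_, rfl⟩
      intro i _
      have h1 : (⟨x, hxTT⟩ : ↥TT) ^ p ^ n = 1 := by
        ext; simpa using hxn
      refine ⟨n, ?_⟩
      have : (e ⟨x, hxTT⟩) ^ p ^ n = 1 := by rw [← map_pow, h1, map_one]
      exact congrFun this i
  -- Tp is normal in Pbold
  have hTpNormal : Tp.Normal := by
    constructor
    intro a ha g
    rw [memTp] at ha ⊢
    obtain ⟨haTT, n, han⟩ := ha
    refine ⟨hN.conj_mem a haTT g, n, ?_⟩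
    rw [conj_pow, han, mul_one, mul_inv_cancel]
  -- the candidate bigger subgroup
  set Q : Subgroup Pbold := P ⊔ Tp with hQ
  have hPQ : P ≤ Q := le_sup_left
  have hTpQ : Tp ≤ Q := le_sup_right
  -- P's discrete p-toral structure
  obtain ⟨r₀, T₀, hT₀norm, ⟨e₀⟩, hPfin, hPpgrp⟩ := hP.2.1
  -- the finite p-group Pbold/TT
  haveI : Finite (Pbold ⧸ TT) := hfin
  obtain ⟨N₀, hN₀⟩ := IsPGroup.iff_card.mp hpgrp
  -- every element of T₀ (viewed in Pbold) lies in Tp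
  have hT₀Tp : ∀ t : ↥P, t ∈ T₀ → (t : Pbold) ∈ Tp := by
    intro t ht
    rw [memTp]
    set u : ↥T₀ := ⟨t, ht⟩ with hu
    constructor
    · -- image in Pbold/TT is trivial since t is p^N₀-divisible
      obtain ⟨g, hg⟩ := myaux_pi_prufer_div hp N₀ (e₀ u)
      set s : ↥T₀ := e₀.symm g with hs
      have hsu : s ^ p ^ N₀ = u := by
        apply e₀.injective
        rw [map_pow, hs, MulEquiv.apply_symm_apply, hg]
      have hsu' : ((s : ↥P) : Pbold) ^ p ^ N₀ = ((u : ↥P) : Pbold) := by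
        rw [← hsu]; rfl
      have : QuotientGroup.mk (s := TT) ((u : ↥P) : Pbold) = 1 := by
        rw [← hsu']
        have : (QuotientGroup.mk (s := TT) ((s : ↥P) : Pbold)) ^ p ^ N₀ = 1 := by
          rw [← hN₀]; exact pow_card_eq_one'
        rw [← this, QuotientGroup.mk_pow]
      rwa [QuotientGroup.eq_one_iff] at this
    · -- t has p-power order
      obtain ⟨N, hNt⟩ := myaux_pi_torsion (e₀ u)
      have h2 : u ^ p ^ N = 1 := by
        apply e₀.injective
        rw [map_pow, hNt, map_one]
      refine ⟨N, ?_⟩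
      calc ((u : ↥P) : Pbold) ^ p ^ N = (((u ^ p ^ N : ↥T₀) : ↥P) : Pbold) := rfl
        _ = 1 := by rw [h2]; rfl
  -- Q is discrete p-toral
  haveI := hTpNormal
  set T' : Subgroup ↥Q := Tp.subgroupOf Q with hT'
  set φ : ↥P →* ↥Q ⧸ T' := (QuotientGroup.mk' T').comp (Subgroup.inclusion hPQ) with hφ
  have hφsurj : Function.Surjective φ := by
    intro qbar
    obtain ⟨q, rfl⟩ := QuotientGroup.mk'_surjective T' qbar
    have hq : (q : Pbold) ∈ P ⊔ Tp := q.2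
    rw [← SetLike.mem_coe, Subgroup.mul_normal P Tp] at hq
    obtain ⟨a, ha, b, hb, hab⟩ := hq
    refine ⟨⟨a, ha⟩, ?_⟩
    show QuotientGroup.mk _ = QuotientGroup.mk q
    rw [QuotientGroup.eq]
    rw [Subgroup.mem_subgroupOf]
    show ((Subgroup.inclusion hPQ ⟨a, ha⟩ : ↥Q) : Pbold)⁻¹ * (q : Pbold) ∈ Tp
    have hcoe : ((Subgroup.inclusion hPQ ⟨a, ha⟩ : ↥Q) : Pbold) = a := rfl
    rw [hcoe, ← hab, inv_mul_cancel_left]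
    exact hb
  have hker : ∀ t : ↥P, t ∈ T₀ → φ t = 1 := by
    intro t ht
    show QuotientGroup.mk' T' (Subgroup.inclusion hPQ t) = 1
    rw [QuotientGroup.mk'_apply, QuotientGroup.eq_one_iff]
    rw [Subgroup.mem_subgroupOf]
    exact hT₀Tp t ht
  have hQdpt : IsDiscretePToral p ↥Q := by
    haveI := hT₀norm
    set ψ : (↥P ⧸ T₀) →* (↥Q ⧸ T') := QuotientGroup.lift T₀ φ hker with hψ
    have hψsurj : Function.Surjective ψ := by
      intro qbar
      obtain ⟨a, ha⟩ := hφsurj qbar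
      exact ⟨QuotientGroup.mk a, ha⟩
    haveI := hPfin
    refine ⟨r, T', Subgroup.normal_subgroupOf, ⟨((Subgroup.subgroupOfEquivOfLe hTpQ).trans eTp)⟩, ?_, ?_⟩
    · exact Finite.of_surjective ψ hψsurj
    · exact hPpgrp.of_surjective ψ hψsurj
  have hQP : Q = P := hP.2.2 Q le_top hQdpt hPQ
  intro x hxTT hxtor
  have : x ∈ Tp := (memTp x).mpr ⟨hxTT, hxtor⟩
  rw [← hQP]
  exact hTpQ this


end
end

section
/- Let K be a finite group and let 0 → I → X → V → 0 be a short exact sequence of ℤ[K]-modules. If V is uniquely |K|-divisible (multiplication by |K| is bijective on V) and I is an injective ℤ-module, then the sequence splits, i.e., X ≅ I × V as ℤ[K]-modules. -/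
open scoped Pointwise
open CategoryTheory

noncomputable section


/-- Let `K` be a finite group and `0 → I → X → V → 0` a short exact
sequence of `ℤ[K]`-modules.  If `V` is uniquely `|K|`-divisible and `I` is an injective
`ℤ`-module, then the sequence splits: `X ≅ I × V` as `ℤ[K]`-modules. -/
theorem splitting_of_ZK_mod (K : Type*) [Group K] [Finite K]
    (I X V : Type*) [AddCommGroup I] [AddCommGroup X] [AddCommGroup V]
    [Module (MonoidAlgebra ℤ K) I] [Module (MonoidAlgebra ℤ K) X]
    [Module (MonoidAlgebra ℤ K) V]
    (f : I →ₗ[MonoidAlgebra ℤ K] X) (g : X →ₗ[MonoidAlgebra ℤ K] V)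
    (hf : Function.Injective f) (hg : Function.Surjective g)
    (hexact : LinearMap.range f = LinearMap.ker g)
    (hV : Function.Bijective fun v : V => (Nat.card K : ℤ) • v)
    (hI : Module.Injective ℤ I) :
    (∃ s : V →ₗ[MonoidAlgebra ℤ K] X, g.comp s = LinearMap.id) ∧
      Nonempty ((I × V) ≃ₗ[MonoidAlgebra ℤ K] X) := by
  classical
  cases nonempty_fintype K
  set A := MonoidAlgebra ℤ K with hA
  haveI := hI
  -- `g ∘ f = 0`
  have hgf : ∀ i : I, g (f i) = 0 := by
    intro i
    have : f i ∈ LinearMap.ker g := hexact ▸ LinearMap.mem_range_self f i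
    exact this
  -- ℤ-linear retraction of `f`
  have fZ : I →ₗ[ℤ] X := f.toAddMonoidHom.toIntLinearMap
  obtain ⟨r, hr⟩ := Module.Injective.extension_property ℤ I I X
    f.toAddMonoidHom.toIntLinearMap hf LinearMap.id
  have hrf : ∀ i : I, r (f i) = i := fun i => LinearMap.congr_fun hr i
  -- a ℤ-linear (set-theoretic, additive) section of `g`
  have key : ∀ x y : X, g x = g y → x - f (r x) = y - f (r y) := by
    intro x y h
    have hxy : x - y ∈ LinearMap.ker g := by
      simp [LinearMap.mem_ker, map_sub, h]
    rw [← hexact] at hxy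
    obtain ⟨i, hi⟩ := hxy
    have hx : x = y + f i := by rw [hi]; abel
    rw [hx, map_add, hrf, map_add]
    abel
  set c : V → X := fun v => Classical.choose (hg v) with hc
  have gc : ∀ v, g (c v) = v := fun v => Classical.choose_spec (hg v)
  set s₀ : V → X := fun v => c v - f (r (c v)) with hs₀
  have hgs₀ : ∀ v, g (s₀ v) = v := by
    intro v
    simp [hs₀, map_sub, gc, hgf]
  have s₀add : ∀ v w, s₀ (v + w) = s₀ v + s₀ w := by
    intro v w
    have h1 : s₀ (v + w) = (c v + c w) - f (r (c v + c w)) := by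
      apply key
      simp [gc]
    rw [h1, map_add, map_add]
    simp only [hs₀]
    abel
  set s₀A : V →+ X := AddMonoidHom.mk' s₀ s₀add with hs₀A
  -- averaged section
  set t : V → X := fun v =>
    ∑ k : K, MonoidAlgebra.of ℤ K k • s₀ (MonoidAlgebra.of ℤ K k⁻¹ • v) with ht
  have hgt : ∀ v, g (t v) = (Nat.card K : ℤ) • v := by
    intro v
    rw [ht]
    simp only [map_sum, map_smul, hgs₀, smul_smul, ← map_mul, mul_inv_cancel, map_one,
      one_smul]
    simp [Finset.sum_const, Nat.card_eq_fintype_card]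
  have tadd : ∀ v w, t (v + w) = t v + t w := by
    intro v w
    rw [ht]
    simp only [smul_add, s₀add]
    rw [← Finset.sum_add_distrib]
  set tA : V →+ X := AddMonoidHom.mk' t tadd with htA
  have tzsmul : ∀ (n : ℤ) (v : V), t (n • v) = n • t v := fun n v => map_zsmul tA n v
  have ht_k : ∀ (h : K) (v : V),
      t (MonoidAlgebra.of ℤ K h • v) = MonoidAlgebra.of ℤ K h • t v := by
    intro h v
    rw [ht]
    simp only
    rw [Finset.smul_sum]
    apply Fintype.sum_equiv (Equiv.mulLeft h).symm
    intro k
    simp only [Equiv.mulLeft_symm, Equiv.coe_mulLeft, smul_smul, mul_inv_rev, inv_inv,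
      ← map_mul, mul_assoc, mul_inv_cancel_left, inv_mul_cancel_left]
  have hsmulZA : ∀ (n : ℤ) (a : A) (v : V), (n • a) • v = n • (a • v) := by
    intro n a v
    rw [zsmul_eq_mul, mul_smul, Int.cast_smul_eq_zsmul]
  have hsmulZAX : ∀ (n : ℤ) (a : A) (x : X), (n • a) • x = n • (a • x) := by
    intro n a x
    rw [zsmul_eq_mul, mul_smul, Int.cast_smul_eq_zsmul]
  have tsmul : ∀ (a : A) (v : V), t (a • v) = a • t v := by
    intro a
    induction a using MonoidAlgebra.induction_on with
    | of k => exact ht_k k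
    | add a b ha hb =>
        intro v
        rw [add_smul, tadd, ha, hb, add_smul]
    | smul n a ha =>
        intro v
        rw [hsmulZA, tzsmul, ha, ← hsmulZAX]
  -- the inverse of multiplication by |K| on V, as an A-linear equivalence
  set m : V →ₗ[A] V :=
    { toFun := fun v => (Nat.card K : ℤ) • v
      map_add' := fun v w => smul_add _ v w
      map_smul' := fun a v => by
        simp only [RingHom.id_apply]
        rw [← Int.cast_smul_eq_zsmul A ((Nat.card K : ℤ)) (a • v),
          ← Int.cast_smul_eq_zsmul A ((Nat.card K : ℤ)) v,
          ← mul_smul, ← mul_smul, Int.cast_comm] } with hm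
  have hmbij : Function.Bijective m := hV
  set e : V ≃ₗ[A] V := LinearEquiv.ofBijective m hmbij with he
  set t' : V →ₗ[A] X :=
    { toFun := t
      map_add' := tadd
      map_smul' := fun a v => tsmul a v } with ht'
  set s : V →ₗ[A] X := t' ∘ₗ (e.symm : V →ₗ[A] V) with hs
  have hsec : g.comp s = LinearMap.id := by
    apply LinearMap.ext
    intro v
    have h1 : g (t (e.symm v)) = (Nat.card K : ℤ) • (e.symm v) := hgt _
    have h2 : m (e.symm v) = v := e.apply_symm_apply v
    simpa [hs, ht', h1, hm] using h2
  refine ⟨⟨s, hsec⟩, ?_⟩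
  have hgs : ∀ v, g (s v) = v := fun v => LinearMap.congr_fun hsec v
  set φ : (I × V) →ₗ[A] X :=
    f ∘ₗ LinearMap.fst A I V + s ∘ₗ LinearMap.snd A I V with hφ
  have hφ_apply : ∀ p : I × V, φ p = f p.1 + s p.2 := fun p => rfl
  have hφinj : Function.Injective φ := by
    intro p q h
    rw [hφ_apply, hφ_apply] at h
    have hv : p.2 = q.2 := by
      have := congrArg g h
      simpa [map_add, hgf, hgs] using this
    have hfi : f p.1 = f q.1 := by
      rw [hv] at h
      exact add_right_cancel h
    have hi : p.1 = q.1 := hf hfi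
    exact Prod.ext hi hv
  have hφsurj : Function.Surjective φ := by
    intro x
    have hker : x - s (g x) ∈ LinearMap.ker g := by
      simp [LinearMap.mem_ker, map_sub, hgs]
    rw [← hexact] at hker
    obtain ⟨i, hi⟩ := hker
    refine ⟨(i, g x), ?_⟩
    rw [hφ_apply]
    simp only
    rw [hi]
    abel
  exact ⟨LinearEquiv.ofBijective φ ⟨hφinj, hφsurj⟩⟩

end
end

section
/- Let 𝐏 be a p-toral group with p-discretization P ⊆ 𝐏. Then there exists a (not necessarily continuous) group homomorphism r: 𝐏 → P that splits the inclusion P ↪ 𝐏 (i.e., r restricted to P is the identity). Moreover, any such splitting r has the property that for any other p-discretization P' of 𝐏, the composite P' ↪ 𝐏 → P is a group isomorphism. -/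
open scoped Pointwise
open CategoryTheory

noncomputable section

/-- every circle element has n-th roots -/
lemma circle_exists_pow_eq (z : Circle) {n : ℕ} (hn : n ≠ 0) : ∃ w : Circle, w ^ n = z := by
  obtain ⟨w, hw⟩ := Complex.isAlgClosed.exists_pow_nat_eq (z : ℂ) (Nat.pos_of_ne_zero hn)
  have h1 : ‖w‖ ^ n = 1 := by rw [← norm_pow, hw, Circle.norm_coe]
  have habs : ‖w‖ = 1 := by
    rcases lt_trichotomy ‖w‖ 1 with h | h | h
    · exact absurd h1 (by have := pow_lt_one₀ (norm_nonneg w) h hn; linarith)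
    · exact h
    · exact absurd h1 (by have := one_lt_pow₀ h hn; linarith)
  refine ⟨⟨w, show w ∈ Submonoid.unitSphere ℂ from mem_sphere_zero_iff_norm.2 (by rw [habs])⟩, ?_⟩
  ext
  push_cast
  exact hw

lemma prufer_exists_pow_eq (p : ℕ) (hp : p.Prime) (x : PruferGroup p) {n : ℕ} (hn : n ≠ 0) :
    ∃ y : PruferGroup p, y ^ n = x := by
  obtain ⟨z, m, hz⟩ := x
  set v : ℕ := n.factorization p with hv
  set m' : ℕ := n / p ^ v with hm'
  have hfact : p ^ v * m' = n := Nat.ordProj_mul_ordCompl_eq_self n p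
  have hcop : Nat.Coprime m' p := (Nat.coprime_ordCompl hp hn).symm
  obtain ⟨w, hw⟩ := circle_exists_pow_eq z (n := p ^ v) (pow_ne_zero _ hp.ne_zero)
  set M : ℕ := m + v + 1 with hM
  have hwM : w ^ p ^ M = 1 := by
    have h0 : w ^ (p ^ v * p ^ (m + 1)) = 1 := by
      rw [pow_mul, hw]
      calc z ^ p ^ (m+1) = (z ^ p ^ m) ^ p := by rw [← pow_mul, ← pow_succ]
        _ = 1 := by rw [hz, one_pow]
    rw [hM]
    calc w ^ p ^ (m + v + 1) = w ^ (p ^ v * p ^ (m+1)) := by ring_nf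
      _ = 1 := h0
  have hcop2 : Nat.Coprime m' (p ^ M) := hcop.pow_right M
  have hlt : 1 < p ^ M := by
    have := hp.one_lt
    calc 1 < p := this
      _ ≤ p ^ M := Nat.le_self_pow (by omega) p
  obtain ⟨c, -, hc⟩ := Nat.exists_mul_mod_eq_one_of_coprime hcop2 hlt
  obtain ⟨q, hq⟩ : ∃ q, m' * c = p ^ M * q + 1 := by
    refine ⟨m' * c / p ^ M, ?_⟩
    have h3 := Nat.div_add_mod (m' * c) (p ^ M)
    omega
  refine ⟨⟨w, M, hwM⟩ ^ c, Subtype.ext ?_⟩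
  show (w ^ c) ^ n = z
  have h1 : c * n = p ^ v * (m' * c) := by rw [← hfact]; ring
  have h2 : w ^ (p ^ v * (p ^ M * q)) = 1 := by
    rw [show p ^ v * (p ^ M * q) = p ^ M * (p ^ v * q) by ring, pow_mul, hwM, one_pow]
  rw [← pow_mul, h1, hq, Nat.mul_add, mul_one, pow_add, h2, one_mul, hw]

open CategoryTheory in
lemma prufer_retraction (p : ℕ) (hp : p.Prime) :
    ∃ f : Circle →* PruferGroup p, ∀ x : PruferGroup p, f ↑x = x := by
  letI : RootableBy (PruferGroup p) ℕ :=
    rootableByOfPowLeftSurj _ _ (fun {n} hn x => by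
      obtain ⟨y, hy⟩ := prufer_exists_pow_eq p hp x hn
      exact ⟨y, hy⟩)
  letI : RootableBy (PruferGroup p) ℤ := Group.rootableByIntOfRootableByNat _
  letI : DivisibleBy (Additive (PruferGroup p)) ℤ :=
    { div := fun a n => Additive.ofMul (RootableBy.root a.toMul n)
      div_zero := fun a => by
        simp only [RootableBy.root_zero]
        rfl
      div_cancel := fun {n} a hn => by
        have := RootableBy.root_cancel (α := ℤ) a.toMul hn
        rw [← ofMul_zpow, this]
        rfl }
  let AP := AddCommGrpCat.of (Additive (PruferGroup p))
  let AC := AddCommGrpCat.of (Additive Circle)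
  let ι : AP ⟶ AC := AddCommGrpCat.ofHom (MonoidHom.toAdditive (PruferGroup p).subtype)
  haveI : Mono ι := by
    rw [AddCommGrpCat.mono_iff_injective]
    intro a b hab
    exact Subtype.ext hab
  haveI : Injective AP := AddCommGrpCat.injective_of_divisible _
  let g : AC ⟶ AP := Injective.factorThru (𝟙 AP) ι
  have hg : ι ≫ g = 𝟙 AP := Injective.comp_factorThru (𝟙 AP) ι
  refine ⟨MonoidHom.toAdditive.symm g.hom, fun x => ?_⟩
  have h2 := congrArg (fun h => h (Additive.ofMul x)) hg
  exact h2


/-- If `M` is an abelian normal subgroup of `G` with finite quotient of cardinality `N`,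
and the `N`-th power map is bijective on `M`, then the projection `G → G ⧸ M` admits
a group-theoretic section. -/
lemma exists_section_of_bijective_pow {G : Type*} [Group G] (M : Subgroup G) [hMn : M.Normal]
    (hcomm : ∀ x y : M, x * y = y * x) [Finite (G ⧸ M)]
    (hbij : Function.Bijective fun m : M => m ^ (Nat.card (G ⧸ M))) :
    ∃ s : (G ⧸ M) →* G, ∀ q : G ⧸ M, QuotientGroup.mk (s q) = q := by
  classical
  letI : Fintype (G ⧸ M) := Fintype.ofFinite _
  letI instCG : CommGroup M := { (inferInstance : Group M) with mul_comm := hcomm }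
  set N := Nat.card (G ⧸ M) with hN
  -- the transversal
  let t : G ⧸ M → G := Quotient.out
  have ht : ∀ q : G ⧸ M, QuotientGroup.mk (t q) = q := fun q => QuotientGroup.out_eq' q
  have hmem : ∀ g : G, (QuotientGroup.mk g : G ⧸ M) = 1 → g ∈ M := fun g hg =>
    (QuotientGroup.eq_one_iff g).1 hg
  -- the 2-cocycle
  have hfmem : ∀ x y : G ⧸ M, t x * t y * (t (x * y))⁻¹ ∈ M := by
    intro x y
    apply hmem
    simp only [QuotientGroup.mk_mul, QuotientGroup.mk_inv, ht]
    group
  let f : G ⧸ M → G ⧸ M → M := fun x y => ⟨t x * t y * (t (x * y))⁻¹, hfmem x y⟩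
  -- the conjugation action
  have hconj : ∀ (g : G) (m : M), g * (m : G) * g⁻¹ ∈ M := fun g m =>
    hMn.conj_mem m.1 m.2 g
  let act : G ⧸ M → (M →* M) := fun x =>
    { toFun := fun m => ⟨t x * (m : G) * (t x)⁻¹, hconj _ m⟩
      map_one' := by ext; simp
      map_mul' := by intro a b; ext; simp only [Subgroup.coe_mul]; group }
  let h : G ⧸ M → M := fun x => ∏ y : G ⧸ M, f x y
  -- the summed cocycle identity
  have hsum : ∀ x y : G ⧸ M, (f x y) ^ N * h (x * y) = act x (h y) * h x := by
    intro x y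
    have hcoc : ∀ z : G ⧸ M, f x y * f (x * y) z = act x (f y z) * f x (y * z) := by
      intro z
      ext
      simp only [MonoidHom.coe_mk, OneHom.coe_mk, Subgroup.coe_mul, f, act]
      rw [mul_assoc x y z]
      group
    calc (f x y) ^ N * h (x * y) = ∏ z : G ⧸ M, (f x y * f (x * y) z) := by
          rw [Finset.prod_mul_distrib, Finset.prod_const, Finset.card_univ, hN, Nat.card_eq_fintype_card]
        _ = ∏ z : G ⧸ M, (act x (f y z) * f x (y * z)) := by
          exact Finset.prod_congr rfl fun z _ => hcoc z
        _ = (∏ z : G ⧸ M, act x (f y z)) * ∏ z : G ⧸ M, f x (y * z) := Finset.prod_mul_distrib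
        _ = act x (h y) * h x := by
          congr 1
          · rw [← map_prod]
          · exact Fintype.prod_equiv (Equiv.mulLeft y) _ _ (fun z => rfl)
  -- the unique N-th root
  let e : M ≃ M := Equiv.ofBijective _ hbij
  have he : ∀ m : M, (e.symm m) ^ N = m := fun m => e.apply_symm_apply m
  -- the corrected section
  let s₀ : G ⧸ M → G := fun x => (↑(e.symm (h x)))⁻¹ * t x
  have key : ∀ x y : G ⧸ M, (e.symm (h (x * y)))⁻¹ = (act x (e.symm (h y)) * e.symm (h x))⁻¹ * f x y := by
    intro x y
    have hNpow : ((act x (e.symm (h y)) * e.symm (h x))⁻¹ * f x y) ^ N = ((e.symm (h (x * y)))⁻¹) ^ N := by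
      have hfN : (f x y) ^ N = act x (h y) * h x * (h (x * y))⁻¹ := by
        rw [← hsum x y]; group
      rw [mul_pow, inv_pow, mul_pow, ← map_pow, he, he, inv_pow, he, hfN]
      group
    have := hbij.injective (a₁ := (act x (e.symm (h y)) * e.symm (h x))⁻¹ * f x y)
      (a₂ := (e.symm (h (x * y)))⁻¹) hNpow
    exact this.symm
  have hs₀ : ∀ x y : G ⧸ M, s₀ (x * y) = s₀ x * s₀ y := by
    intro x y
    have expand : s₀ x * s₀ y =
        ((↑(act x (e.symm (h y)) * e.symm (h x)) : G))⁻¹ * ↑(f x y) * t (x * y) := by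
      simp only [s₀, Subgroup.coe_mul, MonoidHom.coe_mk, OneHom.coe_mk, act, f]
      group
    have key' : ((e.symm (h (x * y)) : M) : G)⁻¹ =
        ((↑(act x (e.symm (h y)) * e.symm (h x)) : G))⁻¹ * ↑(f x y) := by
      have h2 := congrArg (fun m : M => (m : G)) (key x y)
      simpa using h2
    rw [expand]
    show (↑(e.symm (h (x * y))))⁻¹ * t (x * y) = _
    rw [key']
  refine ⟨MonoidHom.mk' s₀ hs₀, fun q => ?_⟩
  · show (QuotientGroup.mk (s₀ q) : G ⧸ M) = q
    have h1 : (QuotientGroup.mk ((↑(e.symm (h q)) : G)⁻¹) : G ⧸ M) = 1 := by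
      rw [QuotientGroup.eq_one_iff]
      exact M.inv_mem (e.symm (h q)).2
    simp only [s₀, QuotientGroup.mk_mul, h1, one_mul, ht]
/-- helper: `x ^ p ^ a = 1` and `a ≤ b` implies `x ^ p ^ b = 1`. -/
lemma pow_p_mono {G : Type*} [Monoid G] {x : G} {p a b : ℕ} (h : x ^ p ^ a = 1) (hab : a ≤ b) :
    x ^ p ^ b = 1 := by
  have : p ^ b = p ^ a * p ^ (b - a) := by rw [← pow_add]; congr 1; omega
  rw [this, pow_mul, h, one_pow]

/-- The subgroup of elements of `p`-power order in a commutative group. -/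
def pPrimary (p : ℕ) (Tg : Type*) [CommGroup Tg] : Subgroup Tg where
  carrier := {x | ∃ n : ℕ, x ^ p ^ n = 1}
  one_mem' := ⟨0, one_pow _⟩
  mul_mem' := by
    rintro a b ⟨n, hn⟩ ⟨m, hm⟩
    refine ⟨n + m, ?_⟩
    rw [mul_pow, pow_add, pow_mul, hn, one_pow, one_mul, mul_comm (p ^ n), pow_mul, hm, one_pow]
  inv_mem' := by
    rintro a ⟨n, hn⟩
    exact ⟨n, by rw [inv_pow, hn, inv_one]⟩

lemma mem_pPrimary_iff {p : ℕ} {Tg : Type*} [CommGroup Tg] {x : Tg} :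
    x ∈ pPrimary p Tg ↔ ∃ n : ℕ, x ^ p ^ n = 1 := Iff.rfl

/-- the p-primary part of `Tg ≃* Circle^ρ` is `(ℤ/p^∞)^ρ`. -/
lemma pPrimary_equiv_prufer {p ρ : ℕ} {Tg : Type*} [CommGroup Tg]
    (e : Tg ≃* (Fin ρ → Circle)) :
    Nonempty ((pPrimary p Tg) ≃* (Fin ρ → PruferGroup p)) := by
  have hmem : ∀ x : pPrimary p Tg, ∀ i : Fin ρ, e ↑x i ∈ PruferGroup p := by
    rintro ⟨x, n, hn⟩ i
    exact ⟨n, by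
      have : (e x) ^ p ^ n = 1 := by rw [← map_pow, hn, map_one]
      exact congrFun this i⟩
  have hmem' : ∀ y : Fin ρ → PruferGroup p, e.symm (fun i => ↑(y i)) ∈ pPrimary p Tg := by
    intro y
    obtain hn : ∀ i, ∃ n, (↑(y i) : Circle) ^ p ^ n = 1 := fun i => (y i).2
    choose ns hns using hn
    refine ⟨Finset.univ.sup ns, ?_⟩
    rw [← map_pow]
    convert e.symm.map_one
    funext i
    simp only [Pi.pow_apply, Pi.one_apply]
    exact pow_p_mono (hns i) (Finset.le_sup (Finset.mem_univ i))
  refine ⟨{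
    toFun := fun x => fun i => ⟨e ↑x i, hmem x i⟩
    invFun := fun y => ⟨e.symm (fun i => ↑(y i)), hmem' y⟩
    left_inv := fun x => Subtype.ext (e.symm_apply_apply ↑x)
    right_inv := by
      intro y
      funext i
      ext
      exact congrArg (fun c : Circle => (c : ℂ)) (congrFun (e.apply_symm_apply _) i)
    map_mul' := by
      intro x y
      funext i
      ext
      have h1 : e ↑(x * y) = e ↑x * e ↑y := by
        rw [show ((x * y : pPrimary p Tg) : Tg) = (↑x : Tg) * ↑y from rfl, map_mul]
      exact congrArg (fun c : Circle => (c : ℂ)) (congrFun h1 i) }⟩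

/-- Main structure lemma: an equivariant complement to the `p`-primary part. -/
lemma exists_equivariant_complement {p : ℕ} (hp : p.Prime) {Tg : Type*} [CommGroup Tg]
    {ρ : ℕ} (e : Tg ≃* (Fin ρ → Circle))
    {π : Type*} [Group π] [Finite π] (hπ : ∃ k, Nat.card π = p ^ k)
    (act : π →* MulAut Tg) :
    ∃ B : Subgroup Tg,
      (∀ (g : π) (x : Tg), x ∈ B → act g x ∈ B) ∧
      (∀ x ∈ B, x ∈ pPrimary p Tg → x = 1) ∧
      (∀ x : Tg, ∃ a ∈ pPrimary p Tg, ∃ b ∈ B, x = a * b) ∧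
      (∀ x ∈ B, ∃ y ∈ B, y ^ p = x) := by
  classical
  letI : Fintype π := Fintype.ofFinite π
  set A := pPrimary p Tg with hA
  -- p-divisibility of Tg
  have hdiv : ∀ x : Tg, ∃ y, y ^ p = x := by
    intro x
    have : ∀ i : Fin ρ, ∃ w : Circle, w ^ p = e x i := fun i =>
      circle_exists_pow_eq (e x i) hp.ne_zero
    choose w hw using this
    refine ⟨e.symm w, ?_⟩
    have : (e.symm w) ^ p = e.symm (w ^ p) := by rw [← map_pow]
    rw [this, show w ^ p = e x from funext hw, e.symm_apply_apply]
  -- A is invariant under any automorphism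
  have hAinv : ∀ (φ : MulAut Tg) (x : Tg), x ∈ A → φ x ∈ A := by
    rintro φ x ⟨n, hn⟩
    exact ⟨n, by rw [← map_pow, hn, map_one]⟩
  -- retraction onto A
  obtain ⟨f, hf⟩ := prufer_retraction p hp
  have hApi : ∀ x : Tg, e.symm (fun i => ↑(f (e x i))) ∈ A := by
    intro x
    have hn : ∀ i, ∃ n, (↑(f (e x i)) : Circle) ^ p ^ n = 1 := fun i => (f (e x i)).2
    choose ns hns using hn
    refine ⟨Finset.univ.sup ns, ?_⟩
    rw [← map_pow]
    convert e.symm.map_one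
    funext i
    exact pow_p_mono (hns i) (Finset.le_sup (Finset.mem_univ i))
  let r0 : Tg →* Tg :=
    { toFun := fun x => e.symm (fun i => ↑(f (e x i)))
      map_one' := by
        show e.symm (fun i => ↑(f (e 1 i))) = 1
        simp only [map_one, Pi.one_apply, OneMemClass.coe_one]
        exact e.symm.map_one
      map_mul' := by
        intro x y
        show e.symm (fun i => ↑(f (e (x * y) i)))
            = e.symm (fun i => ↑(f (e x i))) * e.symm (fun i => ↑(f (e y i)))
        rw [← map_mul]
        congr 1
        funext i
        show (↑(f (e (x * y) i)) : Circle)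
            = ((fun i => (↑(f (e x i)) : Circle)) * fun i => (↑(f (e y i)) : Circle)) i
        rw [map_mul e]
        show (↑(f ((e x * e y) i)) : Circle) = ↑(f (e x i)) * ↑(f (e y i))
        rw [show (e x * e y) i = e x i * e y i from rfl, map_mul, Subgroup.coe_mul] }
  have hr0A : ∀ x : Tg, r0 x ∈ A := hApi
  have hr0id : ∀ x ∈ A, r0 x = x := by
    rintro x ⟨n, hn⟩
    show e.symm (fun i => ↑(f (e x i))) = x
    have hxi : ∀ i, e x i ∈ PruferGroup p := by
      intro i
      refine ⟨n, ?_⟩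
      have : (e x) ^ p ^ n = 1 := by rw [← map_pow, hn, map_one]
      exact congrFun this i
    have : (fun i => (↑(f (e x i)) : Circle)) = e x := by
      funext i
      have := hf ⟨e x i, hxi i⟩
      rw [show ((⟨e x i, hxi i⟩ : PruferGroup p) : Circle) = e x i from rfl] at this
      rw [this]
    rw [this, e.symm_apply_apply]
  -- the mod-A projection
  let s0 : Tg →* Tg :=
    { toFun := fun x => x * (r0 x)⁻¹
      map_one' := by simp
      map_mul' := by
        intro x y
        show x * y * (r0 (x * y))⁻¹ = x * (r0 x)⁻¹ * (y * (r0 y)⁻¹)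
        rw [map_mul, mul_inv]
        ac_rfl }
  have hs0A : ∀ x ∈ A, s0 x = 1 := by
    intro x hx
    show x * (r0 x)⁻¹ = 1
    rw [hr0id x hx, mul_inv_cancel]
  have hs0mod : ∀ x : Tg, s0 x * x⁻¹ ∈ A := by
    intro x
    show x * (r0 x)⁻¹ * x⁻¹ ∈ A
    rw [mul_comm x (r0 x)⁻¹, mul_assoc, mul_inv_cancel, mul_one]
    exact A.inv_mem (hr0A x)
  -- the averaged equivariant projection
  set N := Nat.card π with hNdef
  let F : π → Tg →* Tg := fun g =>
    (act g).toMonoidHom.comp (s0.comp (act g⁻¹).toMonoidHom)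
  let s1 : Tg →* Tg := ∏ g : π, F g
  have hs1apply : ∀ x : Tg, s1 x = ∏ g : π, act g (s0 (act g⁻¹ x)) := by
    intro x
    show (∏ g : π, F g) x = _
    rw [MonoidHom.finset_prod_apply]
    rfl
  have hs1A : ∀ x ∈ A, s1 x = 1 := by
    intro x hx
    rw [hs1apply]
    apply Finset.prod_eq_one
    intro g _
    rw [hs0A _ (hAinv _ _ hx), map_one]
  have hactinv : ∀ (g : π) (x : Tg), act g ((act g⁻¹) x) = x := by
    intro g x
    rw [map_inv, MulAut.inv_def]
    exact (act g).apply_symm_apply x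
  have hs1mod : ∀ x : Tg, s1 x * (x ^ N)⁻¹ ∈ A := by
    intro x
    rw [hs1apply]
    have heach : ∀ g : π, act g (s0 (act g⁻¹ x)) * x⁻¹ ∈ A := by
      intro g
      have h1 : s0 (act g⁻¹ x) = (s0 (act g⁻¹ x) * (act g⁻¹ x)⁻¹) * (act g⁻¹ x) := by group
      rw [h1, map_mul, hactinv, mul_assoc, mul_inv_cancel, mul_one]
      exact hAinv _ _ (hs0mod _)
    have : (∏ g : π, act g (s0 (act g⁻¹ x))) * (x ^ N)⁻¹
        = ∏ g : π, (act g (s0 (act g⁻¹ x)) * x⁻¹) := by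
      rw [Finset.prod_mul_distrib, Finset.prod_const, Finset.card_univ, inv_pow, hNdef,
        Nat.card_eq_fintype_card]
    rw [this]
    exact Subgroup.prod_mem _ fun g _ => heach g
  have hs1equiv : ∀ (g₀ : π) (x : Tg), s1 (act g₀ x) = act g₀ (s1 x) := by
    intro g₀ x
    rw [hs1apply, hs1apply, map_prod]
    refine Fintype.prod_equiv (Equiv.mulLeft g₀⁻¹) _ _ ?_
    intro g
    show act g (s0 (act g⁻¹ (act g₀ x))) = act g₀ (act (g₀⁻¹ * g) (s0 (act (g₀⁻¹ * g)⁻¹ x)))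
    have e1 : act g⁻¹ (act g₀ x) = act (g⁻¹ * g₀) x := by rw [map_mul]; rfl
    have e2 : (g₀⁻¹ * g)⁻¹ = g⁻¹ * g₀ := by group
    rw [e1, e2]
    calc act g (s0 (act (g⁻¹ * g₀) x))
        = act (g₀ * (g₀⁻¹ * g)) (s0 (act (g⁻¹ * g₀) x)) := by
          rw [show g₀ * (g₀⁻¹ * g) = g by group]
      _ = act g₀ (act (g₀⁻¹ * g) (s0 (act (g⁻¹ * g₀) x))) := by rw [map_mul]; rfl
  -- the complement
  refine ⟨s1.range, ?_, ?_, ?_, ?_⟩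
  · rintro g x ⟨y, rfl⟩
    exact ⟨act g y, hs1equiv g y⟩
  · rintro x ⟨y, rfl⟩ hxA
    -- y^N ∈ A, hence y ∈ A, hence s1 y = 1
    have h1 : s1 y * (y ^ N)⁻¹ ∈ A := hs1mod y
    have h2 : (y ^ N)⁻¹ ∈ A := by
      have := A.mul_mem (A.inv_mem hxA) h1
      rwa [inv_mul_cancel_left] at this
    have h3 : y ∈ A := by
      obtain ⟨m, hm⟩ := A.inv_mem h2
      obtain ⟨k, hk⟩ := hπ
      rw [inv_inv] at hm
      refine ⟨k + m, ?_⟩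
      rw [pow_add, ← hk, pow_mul, hm]
    exact hs1A y h3
  · intro x
    -- x has an N-th root y; then x = a * s1 y
    obtain ⟨k, hk⟩ := hπ
    have hdivpow : ∀ (m : ℕ) (z : Tg), ∃ y, y ^ p ^ m = z := by
      intro m
      induction m with
      | zero => intro z; exact ⟨z, pow_one z⟩
      | succ n ih =>
        intro z
        obtain ⟨w, hw⟩ := hdiv z
        obtain ⟨y, hy⟩ := ih w
        exact ⟨y, by rw [pow_succ, pow_mul, hy, hw]⟩
    obtain ⟨y, hy⟩ := hdivpow k x
    rw [← hk] at hy
    refine ⟨(s1 y * (y ^ N)⁻¹)⁻¹, A.inv_mem (hs1mod y), s1 y, ⟨y, rfl⟩, ?_⟩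
    rw [hy]
    group
  · rintro x ⟨y, rfl⟩
    obtain ⟨w, hw⟩ := hdiv y
    exact ⟨s1 w, ⟨w, rfl⟩, by rw [← map_pow, hw]⟩
/-- every element of a discrete p-toral group has p-power order -/
lemma IsDiscretePToral.pPowOrder {p : ℕ} {P : Type*} [Group P] (h : IsDiscretePToral p P)
    (x : P) : ∃ n : ℕ, x ^ p ^ n = 1 := by
  obtain ⟨r, T, hT, ⟨eT⟩, hfin, hpg⟩ := h
  obtain ⟨k, hk⟩ := hpg (QuotientGroup.mk x : P ⧸ T)
  have hmem : x ^ p ^ k ∈ T := by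
    rw [← QuotientGroup.eq_one_iff]
    rw [show ((x ^ p ^ k : P) : P ⧸ T) = (QuotientGroup.mk x : P ⧸ T) ^ p ^ k from rfl, hk]
  set y : T := ⟨x ^ p ^ k, hmem⟩ with hy
  have hcoord : ∀ i, ∃ n, (↑(eT y i) : Circle) ^ p ^ n = 1 := fun i => (eT y i).2
  choose ns hns using hcoord
  set m := Finset.univ.sup ns with hm
  have hym : y ^ p ^ m = 1 := by
    have h1 : eT (y ^ p ^ m) = 1 := by
      rw [map_pow]
      funext i
      refine Subtype.ext ?_
      show ((eT y i : PruferGroup p) : Circle) ^ p ^ m = 1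
      exact pow_p_mono (hns i) (Finset.le_sup (Finset.mem_univ i))
    exact eT.injective (by rw [h1, map_one])
  refine ⟨k + m, ?_⟩
  have := congrArg (Subtype.val) hym
  rw [pow_add, pow_mul]
  exact this

/-- discrete p-torality transports along group isomorphisms -/
lemma IsDiscretePToral.of_mulEquiv {p : ℕ} {G H : Type*} [Group G] [Group H]
    (f : G ≃* H) (h : IsDiscretePToral p G) : IsDiscretePToral p H := by
  obtain ⟨r, T, hT, ⟨eT⟩, hfin, hpg⟩ := h
  refine ⟨r, T.map f.toMonoidHom, hT.map f.toMonoidHom f.surjective, ?_, ?_⟩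
  · exact ⟨((Subgroup.equivMapOfInjective T f.toMonoidHom f.injective).symm.trans eT)⟩
  · letI := hT.map f.toMonoidHom f.surjective
    have hcongr : (G ⧸ T) ≃* (H ⧸ T.map f.toMonoidHom) := QuotientGroup.congr T _ f rfl
    constructor
    · exact Finite.of_equiv _ hcongr.toEquiv
    · intro y
      obtain ⟨x, rfl⟩ := hcongr.surjective y
      obtain ⟨k, hk⟩ := hpg x
      exact ⟨k, by rw [← map_pow, hk, map_one]⟩

section MainProof

/-- conjugating a subgroup by one of its own elements gives the same subgroup -/
lemma map_conj_self {G : Type*} [Group G] (H : Subgroup G) (w : G) (hw : w ∈ H) :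
    Subgroup.map (MulAut.conj w).toMonoidHom H = H := by
  ext x
  constructor
  · rintro ⟨y, hy, rfl⟩
    show w * y * w⁻¹ ∈ H
    exact H.mul_mem (H.mul_mem hw hy) (H.inv_mem hw)
  · intro hx
    refine ⟨w⁻¹ * x * w, ?_, ?_⟩
    · exact H.mul_mem (H.mul_mem (H.inv_mem hw) hx) hw
    · show w * (w⁻¹ * x * w) * w⁻¹ = x
      group

lemma map_conj_conj {G : Type*} [Group G] (H : Subgroup G) (u v : G) :
    Subgroup.map (MulAut.conj u).toMonoidHom (Subgroup.map (MulAut.conj v).toMonoidHom H)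
      = Subgroup.map (MulAut.conj (u * v)).toMonoidHom H := by
  rw [Subgroup.map_map]
  congr 1
  ext x
  show u * (v * x * v⁻¹) * u⁻¹ = (u * v) * x * (u * v)⁻¹
  group

/-- Let `𝐏` be a `p`-toral group with `p`-discretization `P ⊆ 𝐏`.
There is a (not necessarily continuous) group homomorphism `r : 𝐏 → P` splitting the
inclusion `P ↪ 𝐏`; moreover, for any such splitting `r` and any other
`p`-discretization `P'` of `𝐏`, the composite `P' ↪ 𝐏 → P` is a group isomorphism. -/
theorem retraction_to_pDiscretization (p : ℕ) [Fact p.Prime]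
    (Pbold : Type*) [Group Pbold] [TopologicalSpace Pbold] [IsTopologicalGroup Pbold]
    (hPbold : IsPToral p Pbold)
    (P : Subgroup Pbold) (hP : IsMaxDiscretePToral p P) :
    (∃ r : Pbold →* P, ∀ x : P, r ↑x = x) ∧
      ∀ r : Pbold →* P, (∀ x : P, r ↑x = x) →
        ∀ P' : Subgroup Pbold, IsMaxDiscretePToral p P' →
          Function.Bijective fun x : P' => r ↑x := by
  classical
  have hp : p.Prime := (inferInstance : Fact p.Prime).out
  obtain ⟨hcomp, ρ, hTor, hN, hfin, hpg⟩ := hPbold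
  set T := Subgroup.connectedComponentOfOne Pbold with hTdef
  obtain ⟨e, -, -⟩ := hTor
  haveI := hN
  haveI : Finite (Pbold ⧸ T) := hfin
  -- commutativity of T
  have hTcomm : ∀ x y : T, x * y = y * x := fun x y =>
    e.injective (by rw [map_mul, map_mul, mul_comm])
  letI instTC : CommGroup T := { (inferInstance : Group T) with mul_comm := hTcomm }
  have hπcard : ∃ k, Nat.card (Pbold ⧸ T) = p ^ k := by
    letI : Fintype (Pbold ⧸ T) := Fintype.ofFinite _
    exact (IsPGroup.iff_card).1 hpg
  have hconjmem : ∀ (g t : Pbold), t ∈ T → g * t * g⁻¹ ∈ T := fun g t ht => hN.conj_mem t ht g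
  -- conjugation action of Pbold ⧸ T on T
  let φ : Pbold →* MulAut T :=
    { toFun := fun g =>
        { toFun := fun t => ⟨g * ↑t * g⁻¹, hconjmem g ↑t t.2⟩
          invFun := fun t => ⟨g⁻¹ * ↑t * g, by simpa using hconjmem g⁻¹ ↑t t.2⟩
          left_inv := by intro t; ext; show g⁻¹ * (g * ↑t * g⁻¹) * g = ↑t; group
          right_inv := by intro t; ext; show g * (g⁻¹ * ↑t * g) * g⁻¹ = ↑t; group
          map_mul' := by
            intro a b; ext
            show g * (↑a * ↑b) * g⁻¹ = (g * ↑a * g⁻¹) * (g * ↑b * g⁻¹)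
            group }
      map_one' := by
        refine MulEquiv.ext fun t => Subtype.ext ?_
        show (1 : Pbold) * ↑t * (1 : Pbold)⁻¹ = (↑t : Pbold)
        group
      map_mul' := by
        intro a b
        refine MulEquiv.ext fun t => Subtype.ext ?_
        show (a * b) * ↑t * (a * b)⁻¹ = a * (b * ↑t * b⁻¹) * a⁻¹
        group }
  have hφT : ∀ t ∈ T, φ t = 1 := by
    intro t ht
    refine MulEquiv.ext fun x => Subtype.ext ?_
    show t * ↑x * t⁻¹ = ↑x
    have h2 : t * ↑x = ↑x * t := congrArg Subtype.val (hTcomm ⟨t, ht⟩ x)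
    rw [h2]
    group
  let act : (Pbold ⧸ T) →* MulAut T := QuotientGroup.lift T φ hφT
  have hact : ∀ (g : Pbold) (t : T),
      (↑(act (QuotientGroup.mk g) t) : Pbold) = g * ↑t * g⁻¹ := fun g t => rfl
  -- the equivariant complement
  obtain ⟨B_T, hB1, hB2, hB3, hB4⟩ := exists_equivariant_complement hp e hπcard act
  set A : Subgroup Pbold := Subgroup.map T.subtype (pPrimary p T) with hAdef
  set B : Subgroup Pbold := Subgroup.map T.subtype B_T with hBdef
  have hAT : A ≤ T := by rintro x ⟨t, _, rfl⟩; exact t.2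
  have hBT : B ≤ T := by rintro x ⟨t, _, rfl⟩; exact t.2
  have hmemA : ∀ x : Pbold, x ∈ A ↔ (x ∈ T ∧ ∃ n, x ^ p ^ n = 1) := by
    intro x
    constructor
    · rintro ⟨t, ⟨n, hn⟩, rfl⟩
      exact ⟨t.2, n, congrArg Subtype.val hn⟩
    · rintro ⟨hxT, n, hn⟩
      exact ⟨⟨x, hxT⟩, ⟨n, Subtype.ext hn⟩, rfl⟩
  have hmemB : ∀ x : Pbold, x ∈ B ↔ ∃ b : T, b ∈ B_T ∧ ↑b = x := by
    intro x
    constructor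
    · rintro ⟨b, hb, rfl⟩; exact ⟨b, hb, rfl⟩
    · rintro ⟨b, hb, rfl⟩; exact ⟨b, hb, rfl⟩
  haveI hAnormal : A.Normal := by
    constructor
    intro a ha g
    rw [hmemA] at ha ⊢
    obtain ⟨haT, n, hn⟩ := ha
    refine ⟨hconjmem g a haT, n, ?_⟩
    have h3 : (g * a * g⁻¹) ^ p ^ n = g * a ^ p ^ n * g⁻¹ := by
      rw [← MulAut.conj_apply, ← map_pow, MulAut.conj_apply]
    rw [h3, hn]
    group
  haveI hBnormal : B.Normal := by
    constructor
    intro x hx g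
    obtain ⟨b, hb, rfl⟩ := (hmemB x).1 hx
    exact (hmemB _).2 ⟨act (QuotientGroup.mk g) b, hB1 _ b hb, hact g b⟩
  have hBnoP : ∀ x ∈ B, (∃ n, x ^ p ^ n = 1) → x = 1 := by
    rintro x hx ⟨n, hn⟩
    obtain ⟨b, hb, rfl⟩ := (hmemB x).1 hx
    have hbP : b ∈ pPrimary p T := ⟨n, Subtype.ext hn⟩
    rw [hB2 b hb hbP]
    rfl
  have hTcommP : ∀ x y : Pbold, x ∈ T → y ∈ T → x * y = y * x := by
    intro x y hx hy
    exact congrArg Subtype.val (hTcomm ⟨x, hx⟩ ⟨y, hy⟩)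
  -- p-power bijectivity on B
  have hBsurjp : ∀ x : B, ∃ y : B, y ^ p = x := by
    rintro ⟨x, hx⟩
    obtain ⟨b, hb, rfl⟩ := (hmemB x).1 hx
    obtain ⟨y, hy, hyp⟩ := hB4 b hb
    refine ⟨⟨↑y, (hmemB _).2 ⟨y, hy, rfl⟩⟩, ?_⟩
    ext
    exact congrArg (fun t : T => (t : Pbold)) hyp
  have hBcomm : ∀ x y : B, x * y = y * x := by
    intro x y
    ext
    exact hTcommP _ _ (hBT x.2) (hBT y.2)
  have hBinjpow : ∀ (j : ℕ) (b : B), b ^ p ^ j = 1 → b = 1 := by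
    intro j b hb
    have hb' : (↑b : Pbold) ^ p ^ j = 1 := by
      have := congrArg (fun t : B => (t : Pbold)) hb
      simpa using this
    exact Subtype.ext (hBnoP ↑b b.2 ⟨j, hb'⟩)
  have hBbij : ∀ j : ℕ, Function.Bijective (fun b : B => b ^ p ^ j) := by
    intro j
    constructor
    · intro b₁ b₂ hb
      have hb' : b₁ ^ p ^ j = b₂ ^ p ^ j := hb
      have hc : Commute b₁ b₂⁻¹ := hBcomm b₁ b₂⁻¹
      have h1 : (b₁ * b₂⁻¹) ^ p ^ j = 1 := by
        rw [hc.mul_pow, inv_pow, hb', mul_inv_cancel]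
      have := hBinjpow j _ h1
      exact mul_inv_eq_one.1 this
    · intro x
      induction j generalizing x with
      | zero => exact ⟨x, pow_one x⟩
      | succ n ih =>
        obtain ⟨y, hy⟩ := hBsurjp x
        obtain ⟨z, hz⟩ := ih y
        have hz' : z ^ p ^ n = y := hz
        refine ⟨z, ?_⟩
        show z ^ p ^ (n + 1) = x
        rw [pow_succ, pow_mul, hz', hy]
  -- the quotient Pbold ⧸ A and the subgroup M = T/A
  let projA := QuotientGroup.mk' A
  set M : Subgroup (Pbold ⧸ A) := Subgroup.map projA T with hMdef
  haveI hMnormal : M.Normal := hN.map projA (QuotientGroup.mk'_surjective A)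
  have hMcomm : ∀ x y : M, x * y = y * x := by
    rintro ⟨x, hx⟩ ⟨y, hy⟩
    obtain ⟨t, ht, rfl⟩ := hx
    obtain ⟨s, hs, rfl⟩ := hy
    ext
    show projA t * projA s = projA s * projA t
    rw [← map_mul, ← map_mul, hTcommP t s ht hs]
  -- finiteness of (Pbold ⧸ A) ⧸ M
  let ψ : Pbold →* ((Pbold ⧸ A) ⧸ M) := (QuotientGroup.mk' M).comp projA
  have hψT : ∀ t ∈ T, ψ t = 1 := by
    intro t ht
    show QuotientGroup.mk (projA t) = 1
    rw [QuotientGroup.eq_one_iff]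
    exact ⟨t, ht, rfl⟩
  let ψbar : (Pbold ⧸ T) →* ((Pbold ⧸ A) ⧸ M) := QuotientGroup.lift T ψ hψT
  have hψbarsurj : Function.Surjective ψbar := by
    intro y
    obtain ⟨y', rfl⟩ := QuotientGroup.mk'_surjective M y
    obtain ⟨g, rfl⟩ := QuotientGroup.mk'_surjective A y'
    exact ⟨QuotientGroup.mk g, rfl⟩
  haveI hGMfin : Finite ((Pbold ⧸ A) ⧸ M) := Finite.of_surjective _ hψbarsurj
  have hGMpg : IsPGroup p ((Pbold ⧸ A) ⧸ M) := hpg.of_surjective ψbar hψbarsurj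
  have hjcard : ∃ j, Nat.card ((Pbold ⧸ A) ⧸ M) = p ^ j := by
    letI : Fintype ((Pbold ⧸ A) ⧸ M) := Fintype.ofFinite _
    exact (IsPGroup.iff_card).1 hGMpg
  obtain ⟨j, hj⟩ := hjcard
  -- membership of M via B
  have hmemM : ∀ m : M, ∃ b ∈ B, projA b = ↑m := by
    rintro ⟨m, hm⟩
    obtain ⟨t, ht, rfl⟩ := hm
    have hdec : ∃ a ∈ A, ∃ b ∈ B, t = a * b := by
      obtain ⟨a', ha', b', hb', h⟩ := hB3 ⟨t, ht⟩
      exact ⟨(a' : Pbold), (⟨a', ha', rfl⟩ : (a' : Pbold) ∈ A), (b' : Pbold),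
        (hmemB _).2 ⟨b', hb', rfl⟩, congrArg Subtype.val h⟩
    obtain ⟨a, ha, b, hb, rfl⟩ := hdec
    refine ⟨b, hb, ?_⟩
    show projA b = projA (a * b)
    rw [map_mul, show projA a = 1 from (QuotientGroup.eq_one_iff a).2 ha, one_mul]
  have hMbij : Function.Bijective
      (fun m : M => m ^ Nat.card ((Pbold ⧸ A) ⧸ M)) := by
    rw [hj]
    constructor
    · intro m₁ m₂ hm'
      have hm : m₁ ^ p ^ j = m₂ ^ p ^ j := hm'
      -- kernel triviality first
      have hker : ∀ m : M, m ^ p ^ j = 1 → m = 1 := by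
        intro m hm1
        obtain ⟨b, hb, hbm⟩ := hmemM m
        have h1 : projA (b ^ p ^ j) = 1 := by
          rw [map_pow, hbm]
          have := congrArg (fun z : M => (z : Pbold ⧸ A)) hm1
          simpa using this
        have h2 : b ^ p ^ j ∈ A := (QuotientGroup.eq_one_iff _).1 h1
        obtain ⟨n, hn⟩ := ((hmemA _).1 h2).2
        have h3 : b = 1 := hBnoP b hb ⟨j + n, by rw [pow_add, pow_mul, hn]⟩
        ext
        rw [← hbm, h3, map_one]
        rfl
      have hcm : Commute m₁ m₂⁻¹ := hMcomm m₁ m₂⁻¹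
      have h1 : (m₁ * m₂⁻¹) ^ p ^ j = 1 := by
        rw [hcm.mul_pow, inv_pow, hm, mul_inv_cancel]
      exact mul_inv_eq_one.1 (hker _ h1)
    · intro m
      obtain ⟨b, hb, hbm⟩ := hmemM m
      obtain ⟨y, hy⟩ := (hBbij j).2 ⟨b, hb⟩
      have hy' : y ^ p ^ j = ⟨b, hb⟩ := hy
      refine ⟨⟨projA ↑y, ⟨↑y, hBT y.2, rfl⟩⟩, ?_⟩
      ext
      show (projA ↑y) ^ p ^ j = ↑m
      rw [← map_pow, ← hbm]
      congr 1
      exact congrArg (fun t : B => (t : Pbold)) hy'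
  obtain ⟨s, hs⟩ := exists_section_of_bijective_pow M hMcomm hMbij
  -- the complement C
  set C : Subgroup Pbold := Subgroup.comap projA s.range with hCdef
  have hAC : A ≤ C := by
    intro a ha
    show projA a ∈ s.range
    rw [show projA a = 1 from (QuotientGroup.eq_one_iff a).2 ha]
    exact one_mem _
  have hrange_inter : ∀ x, x ∈ s.range → x ∈ M → x = 1 := by
    rintro x ⟨q, rfl⟩ hxM
    have h1 : (QuotientGroup.mk (s q) : (Pbold ⧸ A) ⧸ M) = 1 :=
      (QuotientGroup.eq_one_iff _).2 hxM
    rw [hs q] at h1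
    rw [h1, map_one]
  have hCT_A : ∀ x, x ∈ C → x ∈ T → x ∈ A := by
    intro x hxC hxT
    have h2 : projA x = 1 := hrange_inter _ hxC ⟨x, hxT, rfl⟩
    exact (QuotientGroup.eq_one_iff x).1 h2
  have hCT_top : ∀ g : Pbold, ∃ c ∈ C, ∃ t ∈ T, g = c * t := by
    intro g
    set q : (Pbold ⧸ A) ⧸ M := QuotientGroup.mk (projA g) with hq
    have h1 : (s q)⁻¹ * projA g ∈ M := by
      have : (QuotientGroup.mk ((s q)⁻¹ * projA g) : (Pbold ⧸ A) ⧸ M) = 1 := by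
        rw [QuotientGroup.mk_mul, QuotientGroup.mk_inv, hs q, hq, inv_mul_cancel]
      exact (QuotientGroup.eq_one_iff _).1 this
    obtain ⟨t, ht, hteq⟩ := h1
    refine ⟨g * t⁻¹, ?_, t, ht, by group⟩
    refine ⟨q, ?_⟩
    rw [map_mul, map_inv, hteq]
    group
  -- C is discrete p-toral
  set A'C : Subgroup C := A.subgroupOf C with hA'Cdef
  haveI : A'C.Normal := Subgroup.normal_comap _
  let ψC : C →* (Pbold ⧸ T) := (QuotientGroup.mk' T).comp C.subtype
  have hψCker : ψC.ker = A'C := by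
    ext x
    show (QuotientGroup.mk (↑x : Pbold) : Pbold ⧸ T) = 1 ↔ (↑x : Pbold) ∈ A
    rw [QuotientGroup.eq_one_iff]
    exact ⟨fun h => hCT_A ↑x x.2 h, fun h => hAT h⟩
  have hψCsurj : Function.Surjective ψC := by
    intro y
    obtain ⟨g, rfl⟩ := QuotientGroup.mk_surjective y
    obtain ⟨c, hc, t, ht, rfl⟩ := hCT_top g
    refine ⟨⟨c, hc⟩, ?_⟩
    show (QuotientGroup.mk c : Pbold ⧸ T) = QuotientGroup.mk (c * t)
    have h1 : (QuotientGroup.mk t : Pbold ⧸ T) = 1 := (QuotientGroup.eq_one_iff t).2 ht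
    rw [QuotientGroup.mk_mul, h1, mul_one]
  have hCquotEquiv : (C ⧸ A'C) ≃* (Pbold ⧸ T) :=
    (QuotientGroup.quotientMulEquivOfEq hψCker.symm).trans
      (QuotientGroup.quotientKerEquivOfSurjective ψC hψCsurj)
  haveI hCA'fin : Finite (C ⧸ A'C) := Finite.of_equiv _ hCquotEquiv.symm.toEquiv
  obtain ⟨eA⟩ := pPrimary_equiv_prufer (p := p) e
  have hAeq : Nonempty (A'C ≃* (Fin ρ → PruferGroup p)) := by
    have e1 : A'C ≃* A := Subgroup.subgroupOfEquivOfLe hAC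
    have e2 : A ≃* (pPrimary p T) :=
      (Subgroup.equivMapOfInjective _ T.subtype T.subtype_injective).symm
    exact ⟨(e1.trans e2).trans eA⟩
  have hCdp : IsDiscretePToral p C := by
    refine ⟨ρ, A'C, inferInstance, hAeq, ?_, ?_⟩
    · exact inferInstance
    · intro y
      obtain ⟨k, hk⟩ := hpg (hCquotEquiv y)
      exact ⟨k, hCquotEquiv.injective (by rw [map_pow, hk, map_one])⟩
  -- the projection onto C with kernel B
  let projB := QuotientGroup.mk' B
  have hθinj : Function.Injective (projB.comp C.subtype) := by
    intro c₁ c₂ hc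
    have h1 : projB ((↑c₁ : Pbold) * (↑c₂)⁻¹) = 1 := by
      rw [map_mul, map_inv]
      rw [show projB ↑c₁ = projB ↑c₂ from hc]
      group
    have h2 : (↑c₁ : Pbold) * (↑c₂)⁻¹ ∈ B := (QuotientGroup.eq_one_iff _).1 h1
    have h3 : (↑c₁ : Pbold) * (↑c₂)⁻¹ ∈ C := C.mul_mem c₁.2 (C.inv_mem c₂.2)
    have h4 : (↑c₁ : Pbold) * (↑c₂)⁻¹ ∈ A := hCT_A _ h3 (hBT h2)
    obtain ⟨n, hn⟩ := ((hmemA _).1 h4).2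
    have h5 : (↑c₁ : Pbold) * (↑c₂)⁻¹ = 1 := hBnoP _ h2 ⟨n, hn⟩
    exact Subtype.ext (mul_inv_eq_one.1 h5)
  have hθsurj : Function.Surjective (projB.comp C.subtype) := by
    intro y
    obtain ⟨g, rfl⟩ := QuotientGroup.mk'_surjective B y
    obtain ⟨c, hc, t, ht, rfl⟩ := hCT_top g
    have hdec : ∃ a ∈ A, ∃ b ∈ B, t = a * b := by
      obtain ⟨a', ha', b', hb', h⟩ := hB3 ⟨t, ht⟩
      exact ⟨(a' : Pbold), (⟨a', ha', rfl⟩ : (a' : Pbold) ∈ A), (b' : Pbold),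
        (hmemB _).2 ⟨b', hb', rfl⟩, congrArg Subtype.val h⟩
    obtain ⟨a, ha, b, hb, rfl⟩ := hdec
    refine ⟨⟨c * a, C.mul_mem hc (hAC ha)⟩, ?_⟩
    show projB (c * a) = QuotientGroup.mk (c * (a * b))
    have h1 : (QuotientGroup.mk b : Pbold ⧸ B) = 1 := (QuotientGroup.eq_one_iff b).2 hb
    show QuotientGroup.mk (c * a) = QuotientGroup.mk (c * (a * b))
    have h2 : (QuotientGroup.mk (c * (a * b)) : Pbold ⧸ B)
        = (QuotientGroup.mk (c * a) : Pbold ⧸ B) * QuotientGroup.mk b := by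
      rw [← QuotientGroup.mk_mul]
      congr 1
      group
    rw [h2, h1, mul_one]
  let θ : C ≃* (Pbold ⧸ B) := MulEquiv.ofBijective (projB.comp C.subtype) ⟨hθinj, hθsurj⟩
  let γ : Pbold →* C := (θ.symm.toMonoidHom).comp projB
  have hγc : ∀ c : C, γ ↑c = c := by
    intro c
    show θ.symm (projB ↑c) = c
    rw [show projB ↑c = θ c from rfl]
    exact θ.symm_apply_apply c
  have hγB : ∀ x : Pbold, x * (↑(γ x) : Pbold)⁻¹ ∈ B := by
    intro x
    have h1 : projB ↑(γ x) = projB x := by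
      show (projB.comp C.subtype) (θ.symm (projB x)) = projB x
      exact θ.apply_symm_apply _
    have h2 : projB (x * (↑(γ x))⁻¹) = 1 := by
      rw [map_mul, map_inv, h1]
      group
    exact (QuotientGroup.eq_one_iff _).1 h2
  -- the key rigidity statement
  have key : ∀ Pm : Subgroup Pbold, IsMaxDiscretePToral p Pm →
      ∃ d : Pbold, Pm = Subgroup.map (MulAut.conj d).toMonoidHom C := by
    intro Pm hPm
    obtain ⟨-, hPmdp, hPmmax⟩ := hPm
    have hord : ∀ x : Pm, ∃ n, (↑x : Pbold) ^ p ^ n = 1 := by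
      intro x
      obtain ⟨n, hn⟩ := hPmdp.pPowOrder x
      exact ⟨n, by
        have := congrArg (fun z : Pm => (z : Pbold)) hn
        simpa using this⟩
    let cB : Pm → B := fun x => ⟨↑x * (↑(γ ↑x))⁻¹, hγB ↑x⟩
    have hconjBmem : ∀ (c : C) (b : B), (↑c : Pbold) * ↑b * (↑c)⁻¹ ∈ B := fun c b =>
      hBnormal.conj_mem ↑b b.2 ↑c
    let actB : C → (B →* B) := fun c =>
      { toFun := fun b => ⟨↑c * ↑b * (↑c)⁻¹, hconjBmem c b⟩
        map_one' := by ext; show (↑c : Pbold) * 1 * (↑c)⁻¹ = 1; group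
        map_mul' := by
          intro a b
          ext
          show (↑c : Pbold) * (↑a * ↑b) * (↑c)⁻¹ = (↑c * ↑a * (↑c)⁻¹) * (↑c * ↑b * (↑c)⁻¹)
          group }
    have hcocycle : ∀ x y : Pm, cB (x * y) = cB x * actB (γ ↑x) (cB y) := by
      intro x y
      ext
      show (↑(x * y) : Pbold) * (↑(γ ↑(x * y)) : Pbold)⁻¹ =
        (↑x * (↑(γ ↑x))⁻¹) * (↑(γ ↑x) * (↑y * (↑(γ ↑y))⁻¹) * (↑(γ ↑x))⁻¹)
      have h0 : (↑(x * y) : Pbold) = ↑x * ↑y := rfl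
      have h1 : γ (↑(x * y) : Pbold) = γ ↑x * γ ↑y := by rw [h0, map_mul]
      rw [h1, h0, Subgroup.coe_mul, mul_inv_rev]
      group
    have htriv : ∀ c : C, (↑c : Pbold) ∈ A → ∀ b : B, actB c b = b := by
      intro c hc b
      ext
      show (↑c : Pbold) * ↑b * (↑c)⁻¹ = ↑b
      rw [hTcommP ↑c ↑b (hAT hc) (hBT b.2)]
      group
    set K₁ : Subgroup Pm := Subgroup.comap (γ.comp Pm.subtype) A'C with hK₁def
    haveI : K₁.Normal := Subgroup.normal_comap _
    have hK₁mem : ∀ k : Pm, k ∈ K₁ ↔ (↑(γ ↑k) : Pbold) ∈ A := fun k => Iff.rfl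
    have hcBhom : ∀ k₁ k₂ : Pm, k₁ ∈ K₁ → cB (k₁ * k₂) = cB k₁ * cB k₂ := by
      intro k₁ k₂ h₁
      rw [hcocycle, htriv _ ((hK₁mem k₁).1 h₁)]
    have hcBone' : cB 1 = 1 := by
      refine Subtype.ext ?_
      show (↑(1 : Pm) : Pbold) * (↑(γ ↑(1 : Pm)) : Pbold)⁻¹ = ((1 : B) : Pbold)
      have h0 : (↑(1 : Pm) : Pbold) = 1 := rfl
      rw [h0, map_one]
      simp
    have hcBpow : ∀ k : Pm, k ∈ K₁ → ∀ m : ℕ, cB (k ^ m) = cB k ^ m := by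
      intro k hk m
      induction m with
      | zero => rw [pow_zero, pow_zero]; exact hcBone'
      | succ n ih =>
        rw [pow_succ, pow_succ, hcBhom _ _ (K₁.pow_mem hk n), ih]
    have hcBone : ∀ k : Pm, k ∈ K₁ → cB k = 1 := by
      intro k hk
      obtain ⟨n, hn⟩ := hPmdp.pPowOrder k
      have h1 : cB k ^ p ^ n = 1 := by rw [← hcBpow k hk, hn, hcBone']
      have h2 : (↑(cB k) : Pbold) ^ p ^ n = 1 := by
        have := congrArg (fun z : B => (z : Pbold)) h1
        simpa using this
      exact Subtype.ext (hBnoP _ (cB k).2 ⟨n, h2⟩)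
    have hcBcoset : ∀ (x k : Pm), k ∈ K₁ → cB (x * k) = cB x := by
      intro x k hk
      rw [hcocycle, hcBone k hk, map_one, mul_one]
    -- the finite quotient Pm ⧸ K₁
    let ψ' : Pm →* (C ⧸ A'C) := (QuotientGroup.mk' A'C).comp (γ.comp Pm.subtype)
    have hψ'ker : ψ'.ker = K₁ := by
      ext x
      show (QuotientGroup.mk (γ ↑x) : C ⧸ A'C) = 1 ↔ x ∈ K₁
      rw [QuotientGroup.eq_one_iff]
      exact Iff.rfl
    haveI hG'fin : Finite (Pm ⧸ K₁) := by
      haveI : Finite (Pm ⧸ ψ'.ker) :=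
        Finite.of_injective _ (QuotientGroup.kerLift_injective ψ')
      exact Finite.of_equiv _ (QuotientGroup.quotientMulEquivOfEq hψ'ker).toEquiv
    have hG'pg : IsPGroup p (Pm ⧸ K₁) := by
      intro y
      obtain ⟨x, rfl⟩ := QuotientGroup.mk_surjective y
      obtain ⟨n, hn⟩ := hPmdp.pPowOrder x
      exact ⟨n, by
        rw [show (QuotientGroup.mk x : Pm ⧸ K₁) ^ p ^ n = QuotientGroup.mk (x ^ p ^ n) from rfl,
          hn]
        rfl⟩
    have hj'card : ∃ j', Nat.card (Pm ⧸ K₁) = p ^ j' := by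
      letI : Fintype (Pm ⧸ K₁) := Fintype.ofFinite _
      exact (IsPGroup.iff_card).1 hG'pg
    obtain ⟨j', hj'⟩ := hj'card
    letI : Fintype (Pm ⧸ K₁) := Fintype.ofFinite _
    letI instBC : CommGroup B := { (inferInstance : Group B) with mul_comm := hBcomm }
    let cbar : (Pm ⧸ K₁) → B := Quotient.lift cB (by
      intro a b hab
      have h1 : a⁻¹ * b ∈ K₁ := QuotientGroup.leftRel_apply.1 hab
      have h2 : b = a * (a⁻¹ * b) := by group
      rw [h2, hcBcoset a _ h1])
    have hcbar : ∀ x : Pm, cbar (QuotientGroup.mk x) = cB x := fun x => rfl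
    set N' := Nat.card (Pm ⧸ K₁) with hN'def
    set a0 : B := ∏ z : (Pm ⧸ K₁), cbar z with ha0
    have hmain : ∀ x : Pm, a0 = cB x ^ N' * actB (γ ↑x) a0 := by
      intro x
      have hre : ∏ z : (Pm ⧸ K₁), cbar ((QuotientGroup.mk x) * z) = a0 :=
        Equiv.prod_comp (Equiv.mulLeft (QuotientGroup.mk x)) cbar
      have hterm : ∀ z : (Pm ⧸ K₁),
          cbar ((QuotientGroup.mk x) * z) = cB x * actB (γ ↑x) (cbar z) := by
        intro z
        obtain ⟨y, rfl⟩ := QuotientGroup.mk_surjective z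
        show cbar (QuotientGroup.mk (x * y)) = _
        rw [hcbar, hcbar, hcocycle]
      calc a0 = ∏ z : (Pm ⧸ K₁), cbar ((QuotientGroup.mk x) * z) := hre.symm
        _ = ∏ z : (Pm ⧸ K₁), (cB x * actB (γ ↑x) (cbar z)) :=
            Finset.prod_congr rfl (fun z _ => hterm z)
        _ = cB x ^ N' * actB (γ ↑x) a0 := by
            rw [Finset.prod_mul_distrib, Finset.prod_const, Finset.card_univ, ← map_prod,
              hN'def, Nat.card_eq_fintype_card]
    obtain ⟨d', hd'⟩ : ∃ d' : B, d' ^ N' = a0 := by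
      obtain ⟨d', hd'⟩ := (hBbij j').2 a0
      exact ⟨d', by rw [hj']; exact hd'⟩
    have hcBx : ∀ x : Pm, cB x = d' * (actB (γ ↑x) d')⁻¹ := by
      intro x
      apply (hBbij j').1
      show cB x ^ p ^ j' = (d' * (actB (γ ↑x) d')⁻¹) ^ p ^ j'
      rw [← hj']
      have hcm : Commute d' (actB (γ ↑x) d')⁻¹ := hBcomm _ _
      rw [hcm.mul_pow, inv_pow, ← map_pow, hd']
      rw [eq_mul_inv_iff_mul_eq]
      exact (hmain x).symm
    have hsub : ∀ x : Pm, (↑x : Pbold) = ↑d' * ↑(γ ↑x) * (↑d' : Pbold)⁻¹ := by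
      intro x
      have h1 := congrArg (fun z : B => (z : Pbold)) (hcBx x)
      have h2 : (↑x : Pbold) * (↑(γ ↑x))⁻¹ =
          ↑d' * ((↑(γ ↑x) : Pbold) * ↑d' * (↑(γ ↑x))⁻¹)⁻¹ := h1
      calc (↑x : Pbold) = (↑x * (↑(γ ↑x))⁻¹) * ↑(γ ↑x) := by group
        _ = (↑d' * ((↑(γ ↑x) : Pbold) * ↑d' * (↑(γ ↑x))⁻¹)⁻¹) * ↑(γ ↑x) := by rw [h2]
        _ = ↑d' * ↑(γ ↑x) * (↑d' : Pbold)⁻¹ := by group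
    have hle : Pm ≤ Subgroup.map (MulAut.conj (↑d' : Pbold)).toMonoidHom C := by
      intro x hx
      refine ⟨↑(γ x), SetLike.coe_mem _, ?_⟩
      show (↑d' : Pbold) * ↑(γ x) * (↑d')⁻¹ = x
      exact (hsub ⟨x, hx⟩).symm
    have hdp' : IsDiscretePToral p (Subgroup.map (MulAut.conj (↑d' : Pbold)).toMonoidHom C) :=
      hCdp.of_mulEquiv (Subgroup.equivMapOfInjective C _
        (MulAut.conj (↑d' : Pbold)).injective)
    exact ⟨↑d', (hPmmax _ le_top hdp' hle).symm⟩
  -- Part 1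
  obtain ⟨d, hd⟩ := key P hP
  have hrmem : ∀ g : Pbold, d * ↑(γ (d⁻¹ * g * d)) * d⁻¹ ∈ P := by
    intro g
    rw [hd]
    exact ⟨↑(γ (d⁻¹ * g * d)), SetLike.coe_mem _, rfl⟩
  let rmap : Pbold →* P :=
    MonoidHom.codRestrict
      ((MulAut.conj d).toMonoidHom.comp
        ((C.subtype.comp γ).comp (MulAut.conj d⁻¹).toMonoidHom)) P
      (fun g => by
        have : (MulAut.conj d) ↑(γ ((MulAut.conj d⁻¹) g)) = d * ↑(γ (d⁻¹ * g * d)) * d⁻¹ := by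
          rw [MulAut.conj_apply, MulAut.conj_apply]
          group
        rw [show ((MulAut.conj d).toMonoidHom.comp
            ((C.subtype.comp γ).comp (MulAut.conj d⁻¹).toMonoidHom)) g
            = (MulAut.conj d) ↑(γ ((MulAut.conj d⁻¹) g)) from rfl, this]
        exact hrmem g)
  have hrmap : ∀ x : P, rmap ↑x = x := by
    intro x
    have hx2 : (↑x : Pbold) ∈ Subgroup.map (MulAut.conj d).toMonoidHom C := hd ▸ x.2
    obtain ⟨c, hc, hcx⟩ := hx2
    have hcx' : d * c * d⁻¹ = ↑x := hcx
    apply Subtype.ext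
    show (MulAut.conj d) ↑(γ ((MulAut.conj d⁻¹) ↑x)) = ↑x
    have h1 : (MulAut.conj d⁻¹) (↑x : Pbold) = (↑(⟨c, hc⟩ : C) : Pbold) := by
      show d⁻¹ * ↑x * (d⁻¹)⁻¹ = c
      rw [← hcx']
      group
    rw [h1, hγc ⟨c, hc⟩]
    show d * c * d⁻¹ = ↑x
    exact hcx'
  refine ⟨⟨rmap, hrmap⟩, ?_⟩
  -- Part 2
  intro r hr P' hP'
  obtain ⟨d₂, hd₂⟩ := key P' hP'
  have hP'P : P' = Subgroup.map (MulAut.conj (d₂ * d⁻¹)).toMonoidHom P := by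
    rw [hd, hd₂, map_conj_conj]
    congr 2
    group
  set b : Pbold := d₂ * d⁻¹ with hbdef
  set u : Pbold := ↑(r b) * b⁻¹ with hudef
  have hrconj : ∀ x : P', (↑(r ↑x) : Pbold) = u * ↑x * u⁻¹ := by
    intro x
    have hx2 : (↑x : Pbold) ∈ Subgroup.map (MulAut.conj b).toMonoidHom P := hP'P ▸ x.2
    obtain ⟨y, hy, hyx⟩ := hx2
    have hxy : (↑x : Pbold) = b * y * b⁻¹ := hyx.symm
    have h1 : r ↑x = r b * r y * (r b)⁻¹ := by
      rw [hxy, map_mul, map_mul, map_inv]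
    have h2 : r y = ⟨y, hy⟩ := hr ⟨y, hy⟩
    rw [h1, h2]
    show (↑(r b) : Pbold) * y * (↑(r b))⁻¹ = u * ↑x * u⁻¹
    rw [hudef, hxy]
    group
  constructor
  · intro x₁ x₂ h
    have h1 := congrArg (fun z : P => (z : Pbold)) h
    simp only [hrconj x₁, hrconj x₂] at h1
    have h2 : (↑x₁ : Pbold) = ↑x₂ := by
      have := mul_left_cancel (mul_right_cancel h1)
      exact this
    exact Subtype.ext h2
  · intro z
    have hu : Subgroup.map (MulAut.conj u).toMonoidHom P' = P := by
      rw [hP'P, map_conj_conj]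
      have hub : u * b = ↑(r b) := by rw [hudef]; group
      rw [hub]
      exact map_conj_self P ↑(r b) (r b).2
    have hz : (↑z : Pbold) ∈ Subgroup.map (MulAut.conj u).toMonoidHom P' := by
      rw [hu]
      exact z.2
    obtain ⟨x, hx, hxz⟩ := hz
    refine ⟨⟨x, hx⟩, ?_⟩
    apply Subtype.ext
    show (↑(r ↑(⟨x, hx⟩ : P')) : Pbold) = ↑z
    rw [hrconj ⟨x, hx⟩]
    exact hxz

end MainProof

end
end

section
/- Let 𝐏 be a p-toral group and let P₁ and P₂ be p-discretizations of 𝐏. If Q is a subgroup with Q ⊆ P₁ ∩ P₂, then there exists 𝐲 ∈ C_𝐏(Q) such that c_𝐲(P₁) = P₂. In particular the pair (Q, P₁) is conjugate in 𝐏 to the pair (Q, P₂) by an element fixing Q pointwise. -/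
open scoped Pointwise
open CategoryTheory

noncomputable section

namespace PDisc

variable {p : ℕ} [hp : Fact p.Prime] {G : Type*} [Group G]

theorem conj_pow_eq (g t : G) (n : ℕ) :
    (g * t * g⁻¹) ^ n = g * t ^ n * g⁻¹ := by
  induction n with
  | zero => simp
  | succ n ih => rw [pow_succ, pow_succ, ih]; group

theorem exists_pow_root (V : Subgroup G)
    (hdiv : ∀ v ∈ V, ∃ u ∈ V, u ^ p = v) :
    ∀ (k : ℕ), ∀ v ∈ V, ∃ u ∈ V, u ^ p ^ k = v := by
  intro k
  induction k with
  | zero => exact fun v hv => ⟨v, hv, by simpa using pow_one v⟩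
  | succ k ih =>
    intro v hv
    obtain ⟨u, hu, huv⟩ := hdiv v hv
    obtain ⟨w, hw, hwu⟩ := ih u hu
    exact ⟨w, hw, by rw [pow_succ, pow_mul, hwu, huv]⟩

theorem pow_root_unique (V : Subgroup G)
    (hcomm : ∀ a ∈ V, ∀ b ∈ V, a * b = b * a)
    (htor : ∀ v ∈ V, (∃ k : ℕ, v ^ p ^ k = 1) → v = 1)
    {k : ℕ} {u u' : G} (hu : u ∈ V) (hu' : u' ∈ V)
    (h : u ^ p ^ k = u' ^ p ^ k) : u = u' := by
  have hc : Commute u'⁻¹ u := hcomm u'⁻¹ (V.inv_mem hu') u hu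
  have h1 : (u'⁻¹ * u) ^ p ^ k = 1 := by
    rw [hc.mul_pow, h, inv_pow, inv_mul_cancel]
  have := htor (u'⁻¹ * u) (V.mul_mem (V.inv_mem hu') hu) ⟨k, h1⟩
  rw [inv_mul_eq_one] at this
  exact this.symm

/-- conjugation as a hom on a normal subgroup -/
def conjV (V : Subgroup G) [hVn : V.Normal] (w : G) : V →* V where
  toFun v := ⟨w * v * w⁻¹, hVn.conj_mem v v.2 w⟩
  map_one' := by ext; simp
  map_mul' a b := by ext; push_cast; group

@[simp] theorem conjV_coe (V : Subgroup G) [hVn : V.Normal] (w : G) (v : V) :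
    (conjV V w v : G) = w * v * w⁻¹ := rfl

end PDisc

namespace PDisc
variable {p : ℕ} [hp : Fact p.Prime] {G : Type*} [Group G]

set_option maxHeartbeats 1000000 in
/-- Two finite `p`-subgroups that are "complements" of `V` over the same image are
conjugate by an element of `V` centralizing a common subgroup `K`. -/
theorem complement_conj (V H₁ H₂ K : Subgroup G) [hVn : V.Normal]
    (hcomm : ∀ a ∈ V, ∀ b ∈ V, a * b = b * a)
    (hdiv : ∀ v ∈ V, ∃ u ∈ V, u ^ p = v)
    (htor : ∀ v ∈ V, (∃ k : ℕ, v ^ p ^ k = 1) → v = 1)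
    (hH₁fin : Finite H₁) (hH₁p : IsPGroup p H₁) (hH₂p : IsPGroup p H₂)
    (hle₁ : H₁ ≤ H₂ ⊔ V) (hle₂ : H₂ ≤ H₁ ⊔ V) (hK : K ≤ H₁ ⊓ H₂) :
    ∃ v ∈ V, (∀ k ∈ K, v * k = k * v) ∧
      (∀ h ∈ H₁, v * h * v⁻¹ ∈ H₂) ∧ (∀ h ∈ H₂, v⁻¹ * h * v ∈ H₁) := by
  classical
  -- uniqueness of the `H₂`-component
  have huniq : ∀ a b h : G, a ∈ H₂ → b ∈ H₂ → a * h⁻¹ ∈ V → b * h⁻¹ ∈ V → a = b := by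
    intro a b h ha hb hav hbv
    have hmem : b * a⁻¹ ∈ V := by
      have : b * a⁻¹ = (b * h⁻¹) * (a * h⁻¹)⁻¹ := by group
      rw [this]; exact V.mul_mem hbv (V.inv_mem hav)
    have hmem2 : b * a⁻¹ ∈ H₂ := H₂.mul_mem hb (H₂.inv_mem ha)
    obtain ⟨k, hk⟩ := hH₂p ⟨b * a⁻¹, hmem2⟩
    have hk' : (b * a⁻¹) ^ p ^ k = 1 := by
      have := congrArg (Subgroup.subtype H₂) hk
      simpa using this
    have := htor _ hmem ⟨k, hk'⟩
    rw [mul_inv_eq_one] at this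
    exact this.symm
  -- the matching function `M`
  have hdecomp : ∀ h : H₁, ∃ m : H₂, (m : G) * (h : G)⁻¹ ∈ V := by
    intro h
    have hmem : (h : G) ∈ (↑(H₂ ⊔ V) : Set G) := hle₁ h.2
    rw [Subgroup.mul_normal H₂ V] at hmem
    obtain ⟨a, ha, b, hb, hab⟩ := hmem
    refine ⟨⟨a, ha⟩, ?_⟩
    have : a * ((h : G))⁻¹ = a * b⁻¹ * a⁻¹ := by rw [← hab]; group
    rw [this]
    exact hVn.conj_mem _ (V.inv_mem hb) a
  let M : H₁ → H₂ := fun h => (hdecomp h).choose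
  have hM : ∀ h : H₁, (M h : G) * (h : G)⁻¹ ∈ V := fun h => (hdecomp h).choose_spec
  have hMmul : ∀ g h : H₁, M (g * h) = M g * M h := by
    intro g h
    refine Subtype.ext (huniq _ _ ((g * h : H₁) : G) (M (g*h)).2 (M g * M h).2 (hM (g*h)) ?_)
    have heq : ((M g * M h : H₂) : G) * (((g * h : H₁) : G))⁻¹
        = ((M g : G) * (g : G)⁻¹) * ((g : G) * ((M h : G) * (h : G)⁻¹) * (g : G)⁻¹) := by
      push_cast; group
    rw [heq]
    exact V.mul_mem (hM g) (hVn.conj_mem _ (hM h) g)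
  -- the cocycle d
  let d : H₁ → V := fun h => ⟨(M h : G) * (h : G)⁻¹, hM h⟩
  have hcoc : ∀ g h : H₁, d (g * h) = conjV V (g : G) (d h) * d g := by
    intro g h
    apply Subtype.ext
    show (M (g * h) : G) * (((g * h : H₁)) : G)⁻¹
      = ((g : G) * ((M h : G) * (h : G)⁻¹) * (g : G)⁻¹) * ((M g : G) * (g : G)⁻¹)
    rw [hMmul]
    have h1 : ((M g * M h : H₂) : G) * (((g * h : H₁)) : G)⁻¹
        = ((M g : G) * (g : G)⁻¹) * ((g : G) * ((M h : G) * (h : G)⁻¹) * (g : G)⁻¹) := by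
      push_cast; group
    rw [h1]
    exact hcomm _ (hM g) _ (hVn.conj_mem _ (hM h) g)
  letI : CommGroup V :=
    { (inferInstance : Group V) with
      mul_comm := fun a b => Subtype.ext (hcomm a a.2 b b.2) }
  haveI : Fintype H₁ := Fintype.ofFinite _
  set n := Fintype.card H₁ with hn
  let e : V := ∏ h : H₁, d h
  have hdn : ∀ h : H₁, d h ^ n = (conjV V (h : G) e)⁻¹ * e := by
    intro h
    have h1 : ∀ g : H₁, d (h * g) = conjV V (h : G) (d g) * d h := fun g => hcoc h g
    have h2 : ∏ g : H₁, d (h * g) = e :=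
      Fintype.prod_equiv (Equiv.mulLeft h) _ _ (fun g => rfl)
    have h3 : ∏ g : H₁, d (h * g) = conjV V (h : G) e * d h ^ n := by
      rw [Finset.prod_congr rfl (fun g _ => h1 g), Finset.prod_mul_distrib,
        Finset.prod_const, ← map_prod]
      simp [hn, e]
    rw [h2] at h3
    rw [eq_comm, inv_mul_eq_iff_eq_mul, ← h3]
  -- extract the root
  obtain ⟨j, hj⟩ : ∃ j, n = p ^ j := by
    obtain ⟨j, hj⟩ := IsPGroup.iff_card.mp hH₁p
    exact ⟨j, by rw [hn, ← Nat.card_eq_fintype_card, hj]⟩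
  obtain ⟨v, hvV, hvn⟩ := exists_pow_root V hdiv j (e : G) e.2
  have hvpow : (⟨v, hvV⟩ : V) ^ n = e := by
    apply Subtype.ext; push_cast; rw [hj] at *; exact hvn
  have hdv : ∀ h : H₁, d h = (conjV V (h : G) ⟨v, hvV⟩)⁻¹ * ⟨v, hvV⟩ := by
    intro h
    have hpow : (((conjV V (h : G) ⟨v, hvV⟩)⁻¹ * ⟨v, hvV⟩ : V)) ^ n = d h ^ n := by
      rw [mul_pow, inv_pow, ← map_pow, hvpow, hdn]
    refine Subtype.ext (pow_root_unique (k := j) V hcomm htor (d h).2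
      ((conjV V (h : G) ⟨v, hvV⟩)⁻¹ * (⟨v, hvV⟩ : V)).2 ?_)
    have := congrArg (Subgroup.subtype V) hpow
    push_cast at this
    rw [hj] at this
    exact this.symm
  have hMv : ∀ h : H₁, (M h : G) = v * (h : G) * v⁻¹ := by
    intro h
    have h1 := congrArg (Subgroup.subtype V) (hdv h)
    rw [map_mul, map_inv] at h1
    have hd : Subgroup.subtype V (d h) = (M h : G) * (h : G)⁻¹ := rfl
    rw [hd] at h1
    rw [mul_inv_eq_iff_eq_mul] at h1
    simp only [conjV_coe, Subgroup.coe_subtype] at h1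
    rw [h1]
    rw [show (((h:G) * v * (h:G)⁻¹)⁻¹ * v) * (h:G)
        = ((h:G) * v⁻¹ * (h:G)⁻¹) * v * (h:G) by group]
    rw [hcomm _ (hVn.conj_mem _ (V.inv_mem hvV) (h : G)) v hvV]
    group
  refine ⟨v, hvV, ?_, ?_, ?_⟩
  · intro k hk
    have hk1 : k ∈ H₁ := (hK hk).1
    have hk2 : k ∈ H₂ := (hK hk).2
    have : M ⟨k, hk1⟩ = ⟨k, hk2⟩ := by
      refine Subtype.ext (huniq _ _ k (M ⟨k, hk1⟩).2 hk2 (hM ⟨k, hk1⟩) ?_)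
      simpa using V.one_mem
    have h3 := hMv ⟨k, hk1⟩
    rw [this] at h3
    simp only at h3
    -- h3 : k = v * k * v⁻¹
    conv_rhs => rw [h3]
    group
  · intro h hh
    have := (M ⟨h, hh⟩).2
    rwa [hMv ⟨h, hh⟩] at this
  · intro h hh
    have hmem : (h : G) ∈ (↑(H₁ ⊔ V) : Set G) := hle₂ hh
    rw [Subgroup.mul_normal H₁ V] at hmem
    obtain ⟨a, ha, b, hb, hab⟩ := hmem
    have hhv : h * a⁻¹ ∈ V := by
      have : h * a⁻¹ = a * b * a⁻¹ := by rw [← hab]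
      rw [this]; exact hVn.conj_mem _ hb a
    have : M ⟨a, ha⟩ = ⟨h, hh⟩ :=
      Subtype.ext (huniq _ _ a (M ⟨a, ha⟩).2 hh (hM ⟨a, ha⟩) hhv)
    have h3 := hMv ⟨a, ha⟩
    rw [this] at h3
    simp only at h3
    have : v⁻¹ * h * v = a := by rw [h3]; group
    rw [this]; exact ha

end PDisc

namespace PDisc
variable {p : ℕ} [hp : Fact p.Prime] {G : Type*} [Group G]

set_option maxHeartbeats 1000000 in
/-- Existence of a complement to a uniquely `p`-divisible abelian normal subgroup with
finite `p`-group quotient. -/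
theorem exists_complement (V : Subgroup G) [hVn : V.Normal]
    (hcomm : ∀ a ∈ V, ∀ b ∈ V, a * b = b * a)
    (hdiv : ∀ v ∈ V, ∃ u ∈ V, u ^ p = v)
    (htor : ∀ v ∈ V, (∃ k : ℕ, v ^ p ^ k = 1) → v = 1)
    (hfin : Finite (G ⧸ V)) (hpg : IsPGroup p (G ⧸ V)) :
    ∃ H : Subgroup G, Finite H ∧ IsPGroup p H ∧
      ∀ w : G, ∃ h ∈ H, ∃ u ∈ V, w = h * u := by
  classical
  haveI : Fintype (G ⧸ V) := Fintype.ofFinite _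
  set mkV := QuotientGroup.mk' V with hmkV
  let s : G ⧸ V → G := Quotient.out
  have hs : ∀ q, mkV (s q) = q := fun q => QuotientGroup.out_eq' q
  have hfV : ∀ q₁ q₂ : G ⧸ V, s q₁ * s q₂ * (s (q₁ * q₂))⁻¹ ∈ V := by
    intro q₁ q₂
    rw [← QuotientGroup.eq_one_iff (N := V)]
    have : mkV (s q₁ * s q₂ * (s (q₁ * q₂))⁻¹) = 1 := by
      rw [map_mul, map_mul, map_inv, hs, hs, hs]
      group
    simpa [hmkV] using this
  let f : G ⧸ V → G ⧸ V → V := fun q₁ q₂ => ⟨s q₁ * s q₂ * (s (q₁ * q₂))⁻¹, hfV q₁ q₂⟩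
  have hcoc : ∀ q₁ q₂ q₃ : G ⧸ V,
      f q₁ q₂ * f (q₁ * q₂) q₃ = conjV V (s q₁) (f q₂ q₃) * f q₁ (q₂ * q₃) := by
    intro q₁ q₂ q₃
    apply Subtype.ext
    show (s q₁ * s q₂ * (s (q₁ * q₂))⁻¹) * (s (q₁ * q₂) * s q₃ * (s ((q₁ * q₂) * q₃))⁻¹)
      = (s q₁ * (s q₂ * s q₃ * (s (q₂ * q₃))⁻¹) * (s q₁)⁻¹)
        * (s q₁ * s (q₂ * q₃) * (s (q₁ * (q₂ * q₃)))⁻¹)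
    rw [mul_assoc q₁ q₂ q₃]
    group
  letI : CommGroup V :=
    { (inferInstance : Group V) with
      mul_comm := fun a b => Subtype.ext (hcomm a a.2 b b.2) }
  set N := Fintype.card (G ⧸ V) with hN
  let c : G ⧸ V → V := fun q => ∏ r : G ⧸ V, f q r
  have hkey : ∀ q₁ q₂ : G ⧸ V,
      f q₁ q₂ ^ N * c (q₁ * q₂) = conjV V (s q₁) (c q₂) * c q₁ := by
    intro q₁ q₂
    have h1 : ∏ q₃ : G ⧸ V, (f q₁ q₂ * f (q₁ * q₂) q₃)
        = ∏ q₃ : G ⧸ V, (conjV V (s q₁) (f q₂ q₃) * f q₁ (q₂ * q₃)) :=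
      Finset.prod_congr rfl (fun q₃ _ => hcoc q₁ q₂ q₃)
    rw [Finset.prod_mul_distrib, Finset.prod_const, Finset.prod_mul_distrib, ← map_prod] at h1
    have h2 : ∏ q₃ : G ⧸ V, f q₁ (q₂ * q₃) = c q₁ :=
      Fintype.prod_equiv (Equiv.mulLeft q₂) _ _ (fun q₃ => rfl)
    rw [h2] at h1
    simpa [hN, c] using h1
  obtain ⟨j, hj⟩ : ∃ j, N = p ^ j := by
    obtain ⟨j, hj⟩ := IsPGroup.iff_card.mp hpg
    exact ⟨j, by rw [hN, ← Nat.card_eq_fintype_card, hj]⟩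
  have hroot : ∀ q : G ⧸ V, ∃ b : V, b ^ N = c q := by
    intro q
    obtain ⟨u, hu, hun⟩ := exists_pow_root V hdiv j (c q : G) (c q).2
    exact ⟨⟨u, hu⟩, by apply Subtype.ext; push_cast; rw [hj]; exact hun⟩
  let b : G ⧸ V → V := fun q => (hroot q).choose
  have hb : ∀ q, b q ^ N = c q := fun q => (hroot q).choose_spec
  have hfb : ∀ q₁ q₂ : G ⧸ V,
      f q₁ q₂ = conjV V (s q₁) (b q₂) * b q₁ * (b (q₁ * q₂))⁻¹ := by
    intro q₁ q₂
    have hpow : (conjV V (s q₁) (b q₂) * b q₁ * (b (q₁ * q₂))⁻¹) ^ N = f q₁ q₂ ^ N := by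
      rw [mul_pow, mul_pow, inv_pow, ← map_pow, hb, hb, hb]
      have := hkey q₁ q₂
      rw [← this]
      group
    refine Subtype.ext (pow_root_unique (k := j) V hcomm htor (f q₁ q₂).2
      (conjV V (s q₁) (b q₂) * b q₁ * (b (q₁ * q₂))⁻¹).2 ?_)
    have h3 := congrArg (Subgroup.subtype V) hpow
    push_cast at h3
    rw [hj] at h3
    exact h3.symm
  have hσmul : ∀ q₁ q₂ : G ⧸ V,
      ((b (q₁ * q₂) : G))⁻¹ * s (q₁ * q₂)
        = (((b q₁ : G))⁻¹ * s q₁) * (((b q₂ : G))⁻¹ * s q₂) := by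
    intro q₁ q₂
    have h1 := congrArg (Subgroup.subtype V) (hfb q₁ q₂)
    simp only [map_mul, map_inv, conjV_coe, Subgroup.coe_subtype] at h1
    -- h1 : s q₁ * s q₂ * (s (q₁*q₂))⁻¹ = (s q₁ * b q₂ * (s q₁)⁻¹) * b q₁ * (b (q₁*q₂))⁻¹
    have h2 : s q₁ * s q₂
        = ((s q₁ * (b q₂ : G) * (s q₁)⁻¹) * (b q₁ : G) * ((b (q₁ * q₂) : G))⁻¹) * s (q₁ * q₂) := by
      rw [← h1]; show _ = (s q₁ * s q₂ * (s (q₁ * q₂))⁻¹) * _; group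
    have h3 : (((b q₁ : G))⁻¹ * s q₁) * (((b q₂ : G))⁻¹ * s q₂)
        = ((b q₁ : G))⁻¹ * (s q₁ * ((b q₂ : G))⁻¹ * (s q₁)⁻¹) * (s q₁ * s q₂) := by group
    rw [h3, h2]
    group
  let σ : G ⧸ V →* G := MonoidHom.mk' (fun q => ((b q : G))⁻¹ * s q) (by
    intro q₁ q₂
    exact hσmul q₁ q₂)
  refine ⟨σ.range, ?_, ?_, ?_⟩
  · exact Finite.of_surjective σ.rangeRestrict σ.rangeRestrict_surjective
  · exact IsPGroup.of_surjective hpg σ.rangeRestrict σ.rangeRestrict_surjective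
  · intro w
    have hmks : ∀ q, mkV (σ q) = q := by
      intro q
      show mkV (((b q : G))⁻¹ * s q) = q
      rw [map_mul, map_inv]
      have hbq : mkV ((b q : G)) = 1 := by
        exact (QuotientGroup.eq_one_iff _).mpr (b q).2
      rw [hbq, hs]; group
    refine ⟨σ (mkV w), ⟨mkV w, rfl⟩, (σ (mkV w))⁻¹ * w, ?_, by group⟩
    rw [← QuotientGroup.eq_one_iff (N := V)]
    have : mkV ((σ (mkV w))⁻¹ * w) = 1 := by
      rw [map_mul, map_inv, hmks]
      group
    simpa [hmkV] using this

end PDisc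

namespace PDisc
variable {p : ℕ} [hp : Fact p.Prime]

theorem circle_coe_pow (z : Circle) (n : ℕ) : ((z ^ n : Circle) : ℂ) = (z : ℂ) ^ n := by
  induction n with
  | zero => simp
  | succ n ih => rw [pow_succ, pow_succ, Circle.coe_mul, ih]

/-- the circle is divisible -/
theorem circle_div (z : Circle) {n : ℕ} (hn : 0 < n) : ∃ w : Circle, w ^ n = z := by
  obtain ⟨w, hw⟩ := IsAlgClosed.exists_pow_nat_eq (z : ℂ) hn
  have hnorm : ‖w‖ = 1 := by
    have h1 : ‖w‖ ^ n = 1 := by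
      rw [← norm_pow, hw]
      simpa using Circle.norm_coe z
    by_contra hne
    rcases lt_or_gt_of_ne hne with hlt | hgt
    · exact absurd h1 (ne_of_lt (pow_lt_one₀ (norm_nonneg w) hlt hn.ne'))
    · exact absurd h1 (ne_of_gt (one_lt_pow₀ hgt hn.ne'))
  refine ⟨⟨w, ?_⟩, ?_⟩
  · exact mem_sphere_zero_iff_norm.mpr hnorm
  · apply Circle.ext
    exact (circle_coe_pow _ n).trans hw

/-- elements of the Prüfer group have `p`-power order (subtype version) -/
theorem prufer_tor (x : PruferGroup p) : ∃ n : ℕ, x ^ p ^ n = 1 := by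
  obtain ⟨n, hn⟩ := x.2
  refine ⟨n, ?_⟩
  apply Subtype.ext
  have := congrArg (Subgroup.subtype (PruferGroup p)) (rfl : x ^ p ^ n = x ^ p ^ n)
  show (Subgroup.subtype (PruferGroup p)) (x ^ p ^ n) = _
  rw [map_pow]
  exact hn

/-- the Prüfer group is `p`-divisible -/
theorem prufer_div (x : PruferGroup p) : ∃ y : PruferGroup p, y ^ p = x := by
  obtain ⟨w, hw⟩ := circle_div (x : Circle) hp.out.pos
  obtain ⟨n, hn⟩ := x.2
  refine ⟨⟨w, ⟨n + 1, ?_⟩⟩, ?_⟩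
  · rw [pow_succ', pow_mul, hw]
    exact hn
  · apply Subtype.ext
    show (Subgroup.subtype (PruferGroup p)) (_ ^ p) = _
    rw [map_pow]
    exact hw
end PDisc

namespace PDisc
variable {p : ℕ} [hp : Fact p.Prime]

theorem pow_order_le {G : Type*} [Group G] {x : G} {n N : ℕ} (h : x ^ p ^ n = 1)
    (hle : n ≤ N) : x ^ p ^ N = 1 := by
  have : p ^ N = p ^ n * p ^ (N - n) := by
    rw [← pow_add, Nat.add_sub_cancel' hle]
  rw [this, pow_mul, h, one_pow]

theorem pi_tor {r : ℕ} (x : Fin r → PruferGroup p) : ∃ n : ℕ, x ^ p ^ n = 1 := by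
  classical
  let m : Fin r → ℕ := fun i => (prufer_tor (x i)).choose
  refine ⟨∑ i, m i, ?_⟩
  funext i
  have h1 : (x ^ p ^ ∑ i, m i) i = (x i) ^ p ^ ∑ i, m i := rfl
  rw [h1]
  have h2 := (prufer_tor (x i)).choose_spec
  exact pow_order_le h2 (Finset.single_le_sum (fun i _ => Nat.zero_le (m i)) (Finset.mem_univ i))

theorem pi_div {r : ℕ} (x : Fin r → PruferGroup p) : ∃ y : Fin r → PruferGroup p, y ^ p = x := by
  classical
  refine ⟨fun i => (prufer_div (x i)).choose, ?_⟩
  funext i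
  exact (prufer_div (x i)).choose_spec

theorem tor_of_equiv {A B : Type*} [Group A] [Group B] (η : A ≃* B)
    (h : ∀ a : A, ∃ n : ℕ, a ^ p ^ n = 1) : ∀ b : B, ∃ n : ℕ, b ^ p ^ n = 1 := by
  intro b
  obtain ⟨n, hn⟩ := h (η.symm b)
  refine ⟨n, ?_⟩
  have := congrArg η hn
  rw [map_pow, map_one, MulEquiv.apply_symm_apply] at this
  exact this

theorem div_of_equiv {A B : Type*} [Group A] [Group B] (η : A ≃* B) {k : ℕ}
    (h : ∀ a : A, ∃ y : A, y ^ k = a) : ∀ b : B, ∃ y : B, y ^ k = b := by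
  intro b
  obtain ⟨y, hy⟩ := h (η.symm b)
  refine ⟨η y, ?_⟩
  rw [← map_pow, hy, MulEquiv.apply_symm_apply]

theorem comm_of_equiv {A B : Type*} [Group A] [Group B] (η : A ≃* B)
    (h : ∀ x y : B, x * y = y * x) : ∀ x y : A, x * y = y * x := by
  intro x y
  apply η.injective
  rw [map_mul, map_mul, h]

end PDisc

namespace PDisc
variable {p : ℕ} [hp : Fact p.Prime] {G : Type*} [Group G]

theorem conj_pow_eq' (g t : G) (n : ℕ) :
    (g * t * g⁻¹) ^ n = g * t ^ n * g⁻¹ := by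
  induction n with
  | zero => simp
  | succ n ih => rw [pow_succ, pow_succ, ih]; group

/-- The subgroup of `p`-power torsion elements of an "abelian" subgroup `T`. -/
def pTorsion (p : ℕ) (T : Subgroup G)
    (hcomm : ∀ a ∈ T, ∀ b ∈ T, a * b = b * a) : Subgroup G where
  carrier := {x | x ∈ T ∧ ∃ n : ℕ, x ^ p ^ n = 1}
  one_mem' := ⟨T.one_mem, 0, by simp⟩
  mul_mem' := by
    rintro a b ⟨haT, n, hn⟩ ⟨hbT, m, hm⟩
    refine ⟨T.mul_mem haT hbT, n + m, ?_⟩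
    have hc : Commute a b := hcomm a haT b hbT
    rw [hc.mul_pow, pow_add, pow_mul, hn, one_pow, one_mul, mul_comm (p ^ n), pow_mul, hm,
      one_pow]
  inv_mem' := by
    rintro a ⟨haT, n, hn⟩
    exact ⟨T.inv_mem haT, n, by rw [inv_pow, hn, inv_one]⟩

theorem mem_pTorsion {T : Subgroup G} {hcomm : ∀ a ∈ T, ∀ b ∈ T, a * b = b * a} {x : G} :
    x ∈ pTorsion p T hcomm ↔ x ∈ T ∧ ∃ n : ℕ, x ^ p ^ n = 1 := Iff.rfl

theorem pTorsion_le {T : Subgroup G} {hcomm : ∀ a ∈ T, ∀ b ∈ T, a * b = b * a} :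
    pTorsion p T hcomm ≤ T := fun _ hx => hx.1

theorem pTorsion_normal {T : Subgroup G} {hcomm : ∀ a ∈ T, ∀ b ∈ T, a * b = b * a}
    (hTn : T.Normal) : (pTorsion p T hcomm).Normal := by
  constructor
  rintro x ⟨hxT, n, hn⟩ g
  refine ⟨hTn.conj_mem x hxT g, n, ?_⟩
  rw [conj_pow_eq', hn, mul_one, mul_inv_cancel]

set_option maxHeartbeats 1000000 in
/-- The `p`-power torsion of a torus is the Prüfer torus. -/
def torsionEquiv (T : Subgroup G) (hcomm : ∀ a ∈ T, ∀ b ∈ T, a * b = b * a) {r : ℕ}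
    (e : T ≃* (Fin r → Circle)) :
    (pTorsion p T hcomm) ≃* (Fin r → PruferGroup p) where
  toFun x := fun i => ⟨e ⟨(x : G), x.2.1⟩ i, by
    obtain ⟨n, hn⟩ := x.2.2
    refine ⟨n, ?_⟩
    have h1 : (⟨(x : G), x.2.1⟩ : T) ^ p ^ n = 1 := by
      apply Subtype.ext; push_cast; exact hn
    have h2 : (e ⟨(x : G), x.2.1⟩) ^ p ^ n = 1 := by rw [← map_pow, h1, map_one]
    exact congrFun h2 i⟩
  invFun f := ⟨((e.symm (fun i => ((f i : Circle)))) : G), by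
    refine ⟨(e.symm _).2, ?_⟩
    obtain ⟨n, hn⟩ := pi_tor f
    refine ⟨n, ?_⟩
    have h1 : (fun i => ((f i : Circle))) ^ p ^ n = (1 : Fin r → Circle) := by
      funext i
      exact congrArg (Subgroup.subtype (PruferGroup p)) (congrFun hn i)
    have h3 : e.symm ((fun i => ((f i : Circle))) ^ p ^ n) = 1 := by rw [h1, map_one]
    rw [map_pow] at h3
    have h4 := congrArg (Subgroup.subtype T) h3
    rw [map_pow] at h4
    exact h4⟩
  left_inv x := by
    apply Subtype.ext
    show ((e.symm (fun i => (e ⟨(x : G), x.2.1⟩) i)) : G) = (x : G)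
    rw [show (fun i => (e ⟨(x : G), x.2.1⟩) i) = e ⟨(x : G), x.2.1⟩ from rfl]
    rw [e.symm_apply_apply]
  right_inv f := by
    funext i
    apply Subtype.ext
    show (e ⟨((e.symm (fun i => ((f i : Circle)))) : G), _⟩) i = ((f i : Circle))
    rw [show (⟨((e.symm (fun i => ((f i : Circle)))) : G), _⟩ : T)
        = e.symm (fun i => ((f i : Circle))) from Subtype.ext rfl]
    rw [e.apply_symm_apply]
  map_mul' x y := by
    funext i
    apply Subtype.ext
    show (e ⟨((x * y : _) : G), _⟩) i = (e ⟨(x : G), x.2.1⟩) i * (e ⟨(y : G), y.2.1⟩) i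
    rw [show (⟨((x * y : _) : G), _⟩ : T) = ⟨(x : G), x.2.1⟩ * ⟨(y : G), y.2.1⟩ from
      Subtype.ext rfl]
    rw [map_mul]
    rfl

end PDisc


namespace PDisc
variable {p : ℕ} [hp : Fact p.Prime]

theorem pow_div_iterate {A : Type*} [Group A] (h : ∀ a : A, ∃ b : A, b ^ p = a) :
    ∀ k : ℕ, ∀ a : A, ∃ b : A, b ^ p ^ k = a := by
  intro k
  induction k with
  | zero => exact fun a => ⟨a, by simp⟩
  | succ k ih =>
    intro a
    obtain ⟨b, hb⟩ := h a
    obtain ⟨c, hc⟩ := ih b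
    exact ⟨c, by rw [pow_succ, pow_mul, hc, hb]⟩

end PDisc

/-- Let `𝐏` be a `p`-toral group with `p`-discretizations `P₁, P₂`, and
let `Q ⊆ P₁ ∩ P₂` be a subgroup.  Then there exists `y ∈ C_𝐏(Q)` with `c_y(P₁) = P₂`; in
particular the pair `(Q, P₁)` is conjugate in `𝐏` to `(Q, P₂)` by an element fixing `Q`
pointwise. -/
theorem uniqueness_of_relative_pDiscretizations (p : ℕ) [Fact p.Prime]
    (Pbold : Type*) [Group Pbold] [TopologicalSpace Pbold] [IsTopologicalGroup Pbold]
    (hPbold : IsPToral p Pbold)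
    (P₁ P₂ : Subgroup Pbold)
    (h₁ : IsMaxDiscretePToral p P₁) (h₂ : IsMaxDiscretePToral p P₂)
    (Q : Subgroup Pbold) (hQ : Q ≤ P₁ ⊓ P₂) :
    ∃ y : Pbold, y ∈ Subgroup.centralizer (Q : Set Pbold) ∧ conjSubgroup y P₁ = P₂ := by
  classical
  obtain ⟨hcompact, r, hTor, hN, hfinπ, hpπ⟩ := hPbold
  haveI := hN
  haveI : Finite (Pbold ⧸ Subgroup.connectedComponentOfOne Pbold) := hfinπ
  obtain ⟨e, he, he'⟩ := hTor
  set Tb : Subgroup Pbold := Subgroup.connectedComponentOfOne Pbold with hTbdef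
  -- commutativity of Tb
  have hcommT : ∀ a ∈ Tb, ∀ b ∈ Tb, a * b = b * a := by
    intro a ha b hb
    exact congrArg Subtype.val
      (PDisc.comm_of_equiv e (fun x y => mul_comm x y) ⟨a, ha⟩ ⟨b, hb⟩)
  set Tinf : Subgroup Pbold := PDisc.pTorsion p Tb hcommT with hTinfdef
  haveI hTinfn : Tinf.Normal := PDisc.pTorsion_normal hN
  set ρ : Pbold →* Pbold ⧸ Tinf := QuotientGroup.mk' Tinf with hρdef
  have hρsurj : Function.Surjective ρ := QuotientGroup.mk'_surjective Tinf
  have hker : ∀ x : Pbold, ρ x = 1 ↔ x ∈ Tinf := fun x => QuotientGroup.eq_one_iff x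
  set V : Subgroup (Pbold ⧸ Tinf) := Tb.map ρ with hVdef
  haveI hVn : V.Normal := hN.map ρ hρsurj
  -- divisibility of Tb
  have hdivC : ∀ v : Fin r → Circle, ∃ w, w ^ p = v := by
    intro v
    refine ⟨fun i => (PDisc.circle_div (v i) (Fact.out : p.Prime).pos).choose, funext fun i => ?_⟩
    exact (PDisc.circle_div (v i) (Fact.out : p.Prime).pos).choose_spec
  have hdivT : ∀ x ∈ Tb, ∃ y ∈ Tb, y ^ p = x := by
    intro x hx
    obtain ⟨b, hb⟩ := PDisc.div_of_equiv e.symm hdivC (⟨x, hx⟩ : Tb)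
    refine ⟨(b : Pbold), b.2, ?_⟩
    have := congrArg (Subgroup.subtype Tb) hb
    rw [map_pow] at this
    exact this
  have hdivV : ∀ v ∈ V, ∃ u ∈ V, u ^ p = v := by
    intro v hv
    obtain ⟨t, ht, rfl⟩ := Subgroup.mem_map.mp hv
    obtain ⟨y, hy, hyt⟩ := hdivT t ht
    exact ⟨ρ y, Subgroup.mem_map.mpr ⟨y, hy, rfl⟩, by rw [← map_pow, hyt]⟩
  have htorV : ∀ v ∈ V, (∃ k : ℕ, v ^ p ^ k = 1) → v = 1 := by
    rintro v hv ⟨k, hk⟩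
    obtain ⟨t, ht, rfl⟩ := Subgroup.mem_map.mp hv
    rw [← map_pow] at hk
    have h1 : t ^ p ^ k ∈ Tinf := (hker _).mp hk
    obtain ⟨-, mm, hmm⟩ := h1
    have h2 : t ∈ Tinf := ⟨ht, k + mm, by rw [pow_add, pow_mul]; exact hmm⟩
    exact (hker t).mpr h2
  have hcommV : ∀ a ∈ V, ∀ b ∈ V, a * b = b * a := by
    intro a ha b hb
    obtain ⟨s, hs, rfl⟩ := Subgroup.mem_map.mp ha
    obtain ⟨t, ht, rfl⟩ := Subgroup.mem_map.mp hb
    rw [← map_mul, ← map_mul, hcommT s hs t ht]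
  -- the quotient (Pbold ⧸ Tinf) ⧸ V is a finite p-group
  have hψ : ∀ t ∈ Tb, (QuotientGroup.mk' V).comp ρ t = 1 := by
    intro t ht
    show QuotientGroup.mk' V (ρ t) = 1
    exact (QuotientGroup.eq_one_iff _).mpr (Subgroup.mem_map.mpr ⟨t, ht, rfl⟩)
  set χ : (Pbold ⧸ Tb) →* ((Pbold ⧸ Tinf) ⧸ V) :=
    QuotientGroup.lift Tb ((QuotientGroup.mk' V).comp ρ) hψ with hχdef
  have hχsurj : Function.Surjective χ := by
    intro w
    obtain ⟨x, rfl⟩ := QuotientGroup.mk'_surjective V w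
    obtain ⟨a, rfl⟩ := hρsurj x
    exact ⟨QuotientGroup.mk a, rfl⟩
  haveI hfinWV : Finite ((Pbold ⧸ Tinf) ⧸ V) := Finite.of_surjective χ hχsurj
  have hpgWV : IsPGroup p ((Pbold ⧸ Tinf) ⧸ V) := IsPGroup.of_surjective hpπ χ hχsurj
  -- images of discrete p-toral subgroups are finite p-groups
  have himg : ∀ P' : Subgroup Pbold, IsDiscretePToral p P' →
      Finite (P'.map ρ) ∧ IsPGroup p (P'.map ρ) := by
    intro P' hP'
    obtain ⟨r', TP, hTPn, ⟨η⟩, hfinq, hpgq⟩ := hP'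
    haveI := hTPn
    obtain ⟨s, hs⟩ := IsPGroup.iff_card.mp hpπ
    have hTPsub : ∀ x : P', x ∈ TP → (x : Pbold) ∈ Tinf := by
      intro x hx
      have hdivTP : ∀ a : TP, ∃ b : TP, b ^ p ^ s = a :=
        PDisc.div_of_equiv η.symm (PDisc.pow_div_iterate PDisc.pi_div s)
      obtain ⟨b, hb⟩ := hdivTP ⟨x, hx⟩
      have hb1 : ((b : P') : Pbold) ^ p ^ s = (x : Pbold) := by
        have h1 := congrArg (Subgroup.subtype TP) hb
        rw [map_pow] at h1
        have h2 := congrArg (Subgroup.subtype P') h1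
        rw [map_pow] at h2
        exact h2
      have hxT : (x : Pbold) ∈ Tb := by
        apply (QuotientGroup.eq_one_iff _).mp
        have : (((x : Pbold)) : Pbold ⧸ Tb) = (((b : P') : Pbold) : Pbold ⧸ Tb) ^ p ^ s := by
          rw [← QuotientGroup.mk_pow, hb1]
        rw [this, ← hs]
        exact pow_card_eq_one'
      obtain ⟨n, hn⟩ := PDisc.tor_of_equiv η.symm PDisc.pi_tor (⟨x, hx⟩ : TP)
      refine ⟨hxT, n, ?_⟩
      have h1 := congrArg (Subgroup.subtype TP) hn
      rw [map_pow, map_one] at h1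
      have h2 := congrArg (Subgroup.subtype P') h1
      rw [map_pow, map_one] at h2
      exact h2
    set f : P' →* Pbold ⧸ Tinf := ρ.comp P'.subtype with hfdef
    have hrange : f.range = P'.map ρ := by
      rw [hfdef, MonoidHom.range_comp, Subgroup.range_subtype]
    have hfTP : ∀ x ∈ TP, f.rangeRestrict x = 1 := by
      intro x hx
      apply Subtype.ext
      show f x = 1
      exact (hker _).mpr (hTPsub x hx)
    set φ := QuotientGroup.lift TP f.rangeRestrict hfTP with hφdef
    have hφsurj : Function.Surjective φ := by
      intro w
      obtain ⟨x, rfl⟩ := f.rangeRestrict_surjective w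
      exact ⟨QuotientGroup.mk x, rfl⟩
    constructor
    · rw [← hrange]
      exact Finite.of_surjective φ hφsurj
    · rw [← hrange]
      exact IsPGroup.of_surjective hpgq φ hφsurj
  -- criterion for being discrete p-toral
  have hcrit : ∀ P' : Subgroup Pbold, Tinf ≤ P' → Finite (P'.map ρ) → IsPGroup p (P'.map ρ) →
      IsDiscretePToral p P' := by
    intro P' hle hfin hpg
    have hsubN : (Tinf.subgroupOf P').Normal := by
      constructor
      intro n hn g
      rw [Subgroup.mem_subgroupOf] at hn ⊢
      have h1 : ((g * n * g⁻¹ : P') : Pbold) = (g : Pbold) * (n : Pbold) * (g : Pbold)⁻¹ := by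
        push_cast; rfl
      rw [h1]
      exact hTinfn.conj_mem _ hn _
    have hkerf : (ρ.comp P'.subtype).ker = Tinf.subgroupOf P' := by
      ext x
      rw [MonoidHom.mem_ker, Subgroup.mem_subgroupOf]
      exact hker (x : Pbold)
    letI := hsubN
    have e1 : (P' ⧸ Tinf.subgroupOf P') ≃* (P' ⧸ (ρ.comp P'.subtype).ker) :=
      QuotientGroup.quotientMulEquivOfEq hkerf.symm
    have e2 := QuotientGroup.quotientKerEquivRange (ρ.comp P'.subtype)
    have hrange : (ρ.comp P'.subtype).range = P'.map ρ := by
      rw [MonoidHom.range_comp, Subgroup.range_subtype]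
    haveI hfr : Finite ((ρ.comp P'.subtype).range) := by rw [hrange]; exact hfin
    have hpr : IsPGroup p ((ρ.comp P'.subtype).range) := by rw [hrange]; exact hpg
    refine ⟨r, Tinf.subgroupOf P', hsubN,
      ⟨(Subgroup.subgroupOfEquivOfLe hle).trans (PDisc.torsionEquiv Tb hcommT e)⟩, ?_, ?_⟩
    · exact Finite.of_equiv _ (e1.trans e2).symm.toEquiv
    · exact IsPGroup.of_equiv hpr (e1.trans e2).symm
  -- maximal discrete p-toral subgroups contain Tinf
  have hTinfLe : ∀ P' : Subgroup Pbold, IsMaxDiscretePToral p P' → Tinf ≤ P' := by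
    intro P' hmax
    obtain ⟨hfin', hpg'⟩ := himg P' hmax.2.1
    have hmapT : Tinf.map ρ = ⊥ := by
      rw [Subgroup.map_eq_bot_iff, hρdef, QuotientGroup.ker_mk']
    have hsup : (P' ⊔ Tinf).map ρ = P'.map ρ := by
      rw [Subgroup.map_sup, hmapT, sup_bot_eq]
    have hdpt : IsDiscretePToral p ↥(P' ⊔ Tinf) := by
      refine hcrit _ le_sup_right ?_ ?_
      · rw [hsup]; exact hfin'
      · rw [hsup]; exact hpg'
    have := hmax.2.2 (P' ⊔ Tinf) le_top hdpt le_sup_left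
    rw [← this]
    exact le_sup_right
  -- the complement
  obtain ⟨H, hHfin, hHp, hHdec⟩ :=
    PDisc.exists_complement (p := p) V hcommV hdivV htorV hfinWV hpgWV
  have hT₁ : Tinf ≤ P₁ := hTinfLe P₁ h₁
  have hT₂ : Tinf ≤ P₂ := hTinfLe P₂ h₂
  obtain ⟨hfin₁, hpg₁⟩ := himg P₁ h₁.2.1
  obtain ⟨hfin₂, hpg₂⟩ := himg P₂ h₂.2.1
  -- every maximal discrete p-toral subgroup gives a full complement
  have hfull : ∀ P' : Subgroup Pbold, IsMaxDiscretePToral p P' →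
      Finite (P'.map ρ) → IsPGroup p (P'.map ρ) →
      ∀ w : Pbold ⧸ Tinf, ∃ h ∈ P'.map ρ, ∃ u ∈ V, w = h * u := by
    intro P' hmax hfin hpg
    set Pb := P'.map ρ with hPbdef
    haveI hH2fin : Finite (H ⊓ (Pb ⊔ V) : Subgroup (Pbold ⧸ Tinf)) := by
      haveI := hHfin
      refine Finite.of_injective (fun x : (H ⊓ (Pb ⊔ V) : Subgroup (Pbold ⧸ Tinf)) =>
        (⟨(x : Pbold ⧸ Tinf), x.2.1⟩ : H)) ?_
      intro a b hab
      have := congrArg Subtype.val hab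
      exact Subtype.ext this
    have hH2p : IsPGroup p (H ⊓ (Pb ⊔ V) : Subgroup (Pbold ⧸ Tinf)) := by
      intro x
      obtain ⟨k, hk⟩ := hHp ⟨(x : Pbold ⧸ Tinf), x.2.1⟩
      refine ⟨k, ?_⟩
      apply Subtype.ext
      have h1 := congrArg (Subgroup.subtype H) hk
      rw [map_pow, map_one] at h1
      show (Subgroup.subtype _) (x ^ p ^ k) = 1
      rw [map_pow]
      exact h1
    have hle2 : Pb ≤ (H ⊓ (Pb ⊔ V)) ⊔ V := by
      intro x hx
      obtain ⟨h, hh, u, hu, hxu⟩ := hHdec x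
      have hhmem : h ∈ H ⊓ (Pb ⊔ V) := by
        refine ⟨hh, ?_⟩
        have hhx : h = x * u⁻¹ := by rw [hxu]; group
        rw [hhx]
        exact Subgroup.mul_mem _ (Subgroup.mem_sup_left hx)
          (Subgroup.mem_sup_right (V.inv_mem hu))
      rw [hxu]
      exact Subgroup.mul_mem _ (Subgroup.mem_sup_left hhmem) (Subgroup.mem_sup_right hu)
    obtain ⟨v₁, hv₁V, -, hconjA, hconjB⟩ :=
      PDisc.complement_conj (p := p) V (H ⊓ (Pb ⊔ V)) Pb ⊥ hcommV hdivV htorV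
        hH2fin hH2p hpg inf_le_right hle2 bot_le
    set cA := MulAut.conj v₁ with hcAdef
    set G₁ := H.map cA.toMonoidHom with hG₁def
    have hPbG : Pb ≤ G₁ := by
      intro x hx
      have hmem := hconjB x hx
      refine Subgroup.mem_map.mpr ⟨v₁⁻¹ * x * v₁, hmem.1, ?_⟩
      show cA (v₁⁻¹ * x * v₁) = x
      rw [hcAdef, MulAut.conj_apply]
      group
    have hG₁equiv := MulEquiv.subgroupMap cA H
    haveI hG₁fin : Finite G₁ := by
      haveI := hHfin
      exact Finite.of_equiv _ hG₁equiv.toEquiv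
    have hG₁p : IsPGroup p G₁ := IsPGroup.of_equiv hHp hG₁equiv
    have hcomap1 : Subgroup.map ρ (Subgroup.comap ρ G₁) = G₁ :=
      Subgroup.map_comap_eq_self_of_surjective hρsurj G₁
    have hmaxeq : Subgroup.comap ρ G₁ = P' := by
      refine hmax.2.2 _ le_top ?_ ?_
      · refine hcrit _ ?_ ?_ ?_
        · intro t ht
          have : ρ t = 1 := (hker t).mpr ht
          show ρ t ∈ G₁
          rw [this]
          exact G₁.one_mem
        · rw [hcomap1]; exact hG₁fin
        · rw [hcomap1]; exact hG₁p
      · intro x hx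
        show ρ x ∈ G₁
        exact hPbG (Subgroup.mem_map.mpr ⟨x, hx, rfl⟩)
    have hPbeq : Pb = G₁ := by
      calc Pb = (Subgroup.comap ρ G₁).map ρ := by rw [hmaxeq]
      _ = G₁ := hcomap1
    intro w
    obtain ⟨h, hh, u, hu, hw⟩ := hHdec (v₁⁻¹ * w * v₁)
    refine ⟨v₁ * h * v₁⁻¹, ?_, v₁ * u * v₁⁻¹, hVn.conj_mem u hu v₁, ?_⟩
    · rw [hPbeq]
      exact Subgroup.mem_map.mpr ⟨h, hh, rfl⟩
    · have hw2 : w = v₁ * (v₁⁻¹ * w * v₁) * v₁⁻¹ := by group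
      rw [hw2, hw]
      group
  have hdec₁ := hfull P₁ h₁ hfin₁ hpg₁
  have hdec₂ := hfull P₂ h₂ hfin₂ hpg₂
  -- conjugate the two complements
  have hle12 : P₁.map ρ ≤ (P₂.map ρ) ⊔ V := by
    intro x _
    obtain ⟨h, hh, u, hu, hxu⟩ := hdec₂ x
    rw [hxu]
    exact Subgroup.mul_mem _ (Subgroup.mem_sup_left hh) (Subgroup.mem_sup_right hu)
  have hle21 : P₂.map ρ ≤ (P₁.map ρ) ⊔ V := by
    intro x _
    obtain ⟨h, hh, u, hu, hxu⟩ := hdec₁ x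
    rw [hxu]
    exact Subgroup.mul_mem _ (Subgroup.mem_sup_left hh) (Subgroup.mem_sup_right hu)
  have hKle : Q.map ρ ≤ (P₁.map ρ) ⊓ (P₂.map ρ) :=
    le_inf (Subgroup.map_mono (hQ.trans inf_le_left)) (Subgroup.map_mono (hQ.trans inf_le_right))
  obtain ⟨vb, hvbV, hvbcent, hconj12, hconj21⟩ :=
    PDisc.complement_conj (p := p) V (P₁.map ρ) (P₂.map ρ) (Q.map ρ) hcommV hdivV htorV
      hfin₁ hpg₁ hpg₂ hle12 hle21 hKle
  -- Step 7: correct the conjugating element to centralize Q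
  set κ : Pbold →* Pbold ⧸ Tb := QuotientGroup.mk' Tb with hκdef
  set πQ : Subgroup (Pbold ⧸ Tb) := Q.map κ with hπQdef
  obtain ⟨m, hm⟩ := IsPGroup.iff_card.mp (IsPGroup.to_subgroup hpπ πQ)
  obtain ⟨wb, hwbV, hwbpow⟩ := PDisc.exists_pow_root (p := p) V hdivV m vb⁻¹ (V.inv_mem hvbV)
  have hvbcomm : ∀ q ∈ Q, Commute vb⁻¹ (ρ q) := by
    intro q hq
    have h0 : Commute vb (ρ q) := hvbcent (ρ q) (Subgroup.mem_map.mpr ⟨q, hq, rfl⟩)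
    exact h0.inv_left
  have hwbfix : ∀ q ∈ Q, (ρ q)⁻¹ * wb * (ρ q) = wb := by
    intro q hq
    have hmem : (ρ q)⁻¹ * wb * (ρ q) ∈ V := by
      have := hVn.conj_mem wb hwbV (ρ q)⁻¹
      rwa [inv_inv] at this
    refine PDisc.pow_root_unique (p := p) (k := m) V hcommV htorV hmem hwbV ?_
    have h1 : ((ρ q)⁻¹ * wb * (ρ q)) ^ p ^ m = (ρ q)⁻¹ * wb ^ p ^ m * (ρ q) := by
      have := PDisc.conj_pow_eq' (ρ q)⁻¹ wb (p ^ m)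
      rwa [inv_inv] at this
    rw [h1, hwbpow]
    have h2 := (hvbcomm q hq).eq
    -- vb⁻¹ * ρ q = ρ q * vb⁻¹
    rw [show (ρ q)⁻¹ * vb⁻¹ * ρ q = (ρ q)⁻¹ * (vb⁻¹ * ρ q) by group, h2]
    group
  obtain ⟨z, hzT, hzwb⟩ := Subgroup.mem_map.mp hwbV
  have hδmem : ∀ q ∈ Q, z⁻¹ * q⁻¹ * z * q ∈ Tinf := by
    intro q hq
    apply (hker _).mp
    rw [map_mul, map_mul, map_mul, map_inv, map_inv, hzwb]
    rw [show wb⁻¹ * (ρ q)⁻¹ * wb * ρ q = wb⁻¹ * ((ρ q)⁻¹ * wb * ρ q) by group,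
      hwbfix q hq]
    group
  have hδwd : ∀ q q' : Pbold, q ∈ Q → q' ∈ Q → κ q = κ q' →
      z⁻¹ * q⁻¹ * z * q = z⁻¹ * q'⁻¹ * z * q' := by
    intro q q' hq hq' hqq
    have hc : q⁻¹ * q' ∈ Tb := by
      apply (QuotientGroup.eq_one_iff _).mp
      show κ (q⁻¹ * q') = 1
      rw [map_mul, map_inv, hqq]
      group
    set c := q⁻¹ * q' with hcdef
    have hq'eq : q' = q * c := by rw [hcdef]; group
    have hzc : z * c = c * z := hcommT z hzT c hc
    have hmemT : z⁻¹ * q⁻¹ * z * q ∈ Tb := by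
      have h2 : q⁻¹ * z * q ∈ Tb := by
        have := hN.conj_mem z hzT q⁻¹
        rwa [inv_inv] at this
      have h3 := Tb.mul_mem (Tb.inv_mem hzT) h2
      rwa [show z⁻¹ * (q⁻¹ * z * q) = z⁻¹ * q⁻¹ * z * q by group] at h3
    have h1 : z⁻¹ * q'⁻¹ * z * q' = c⁻¹ * (z⁻¹ * q⁻¹ * z * q) * c := by
      rw [hq'eq]
      have hzc' : z⁻¹ * c⁻¹ = c⁻¹ * z⁻¹ := by
        rw [← mul_inv_rev, ← mul_inv_rev, hzc]
      rw [show z⁻¹ * (q * c)⁻¹ * z * (q * c) = (z⁻¹ * c⁻¹) * q⁻¹ * z * q * c by group]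
      rw [hzc']
      group
    rw [h1]
    have h4 := hcommT _ hmemT c hc
    rw [show c⁻¹ * (z⁻¹ * q⁻¹ * z * q) * c = c⁻¹ * ((z⁻¹ * q⁻¹ * z * q) * c) by group, h4]
    group
  letI : CommGroup Tinf :=
    { (inferInstance : Group Tinf) with
      mul_comm := fun a b => Subtype.ext (hcommT a a.2.1 b b.2.1) }
  haveI : Fintype πQ := Fintype.ofFinite _
  have hrep : ∀ ξ : πQ, ∃ q, q ∈ Q ∧ κ q = (ξ : Pbold ⧸ Tb) := by
    intro ξ
    obtain ⟨q, hq, hq'⟩ := Subgroup.mem_map.mp ξ.2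
    exact ⟨q, hq, hq'⟩
  set rep : πQ → Pbold := fun ξ => (hrep ξ).choose with hrepdef
  have hrepQ : ∀ ξ, rep ξ ∈ Q := fun ξ => (hrep ξ).choose_spec.1
  have hrepκ : ∀ ξ, κ (rep ξ) = (ξ : Pbold ⧸ Tb) := fun ξ => (hrep ξ).choose_spec.2
  set D : πQ → Tinf := fun ξ => ⟨z⁻¹ * (rep ξ)⁻¹ * z * (rep ξ), hδmem _ (hrepQ ξ)⟩ with hDdef
  set e₀ : Tinf := ∏ ξ : πQ, D ξ with he₀def
  set n := Fintype.card πQ with hndef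
  have hnpm : n = p ^ m := by rw [hndef, ← Nat.card_eq_fintype_card, hm]
  have hkey : ∀ q ∈ Q, (z⁻¹ * q⁻¹ * z * q) ^ n
      = (e₀ : Pbold) * (q⁻¹ * (e₀ : Pbold) * q)⁻¹ := by
    intro q hq
    -- conjugation by q on Tinf
    have hqconj : ∀ t : Tinf, q⁻¹ * (t : Pbold) * q ∈ Tinf := by
      intro t
      have := hTinfn.conj_mem (t : Pbold) t.2 q⁻¹
      rwa [inv_inv] at this
    set χq : Tinf →* Tinf :=
      { toFun := fun t => ⟨q⁻¹ * (t : Pbold) * q, hqconj t⟩,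
        map_one' := by apply Subtype.ext; simp,
        map_mul' := fun a b => by apply Subtype.ext; push_cast; group } with hχqdef
    set δq : Tinf := ⟨z⁻¹ * q⁻¹ * z * q, hδmem q hq⟩ with hδqdef
    have hκq : κ q ∈ πQ := Subgroup.mem_map.mpr ⟨q, hq, rfl⟩
    have hstep : ∀ ξ : πQ, D (ξ * ⟨κ q, hκq⟩) = δq * χq (D ξ) := by
      intro ξ
      apply Subtype.ext
      show z⁻¹ * (rep (ξ * ⟨κ q, hκq⟩))⁻¹ * z * (rep (ξ * ⟨κ q, hκq⟩))
        = (z⁻¹ * q⁻¹ * z * q) * (q⁻¹ * (z⁻¹ * (rep ξ)⁻¹ * z * (rep ξ)) * q)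
      have hwd := hδwd (rep (ξ * ⟨κ q, hκq⟩)) (rep ξ * q)
        (hrepQ _) (Q.mul_mem (hrepQ ξ) hq) ?_
      · rw [hwd]
        group
      · rw [hrepκ, map_mul, hrepκ]
        rfl
    have hprod1 : ∏ ξ : πQ, D (ξ * ⟨κ q, hκq⟩) = e₀ :=
      Fintype.prod_equiv (Equiv.mulRight (⟨κ q, hκq⟩ : πQ)) _ _ (fun ξ => rfl)
    have hprod2 : ∏ ξ : πQ, D (ξ * ⟨κ q, hκq⟩) = δq ^ n * χq e₀ := by
      rw [Finset.prod_congr rfl (fun ξ _ => hstep ξ), Finset.prod_mul_distrib,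
        Finset.prod_const, ← map_prod]
      rw [hndef, Finset.card_univ, he₀def]
    have h5 : e₀ = δq ^ n * χq e₀ := by rw [← hprod2, hprod1]
    have h6 : δq ^ n = e₀ * (χq e₀)⁻¹ := eq_mul_inv_iff_mul_eq.mpr h5.symm
    have h7 := congrArg (Subgroup.subtype Tinf) h6
    rw [map_pow, map_mul, map_inv] at h7
    exact h7
  set y := z ^ n * (e₀ : Pbold) with hydef
  have hρy : ρ y = vb⁻¹ := by
    rw [hydef, map_mul, map_pow, hzwb]
    have he₀1 : ρ ((e₀ : Pbold)) = 1 := (hker _).mpr e₀.2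
    rw [he₀1, mul_one, hnpm, hwbpow]
  have hycent : ∀ q ∈ Q, q * y = y * q := by
    intro q hq
    have hcz : Commute z⁻¹ (q⁻¹ * z * q) := by
      have hqzq : q⁻¹ * z * q ∈ Tb := by
        have := hN.conj_mem z hzT q⁻¹
        rwa [inv_inv] at this
      have := hcommT z⁻¹ (Tb.inv_mem hzT) _ hqzq
      exact this
    have h1 : (z ^ n)⁻¹ * q⁻¹ * z ^ n * q = (z⁻¹ * q⁻¹ * z * q) ^ n := by
      have hA : (z⁻¹ * (q⁻¹ * z * q)) ^ n = (z⁻¹) ^ n * (q⁻¹ * z * q) ^ n := hcz.mul_pow n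
      have hB : (q⁻¹ * z * q) ^ n = q⁻¹ * z ^ n * q := by
        have := PDisc.conj_pow_eq' q⁻¹ z n
        rwa [inv_inv] at this
      rw [show (z ^ n)⁻¹ * q⁻¹ * z ^ n * q = (z⁻¹) ^ n * (q⁻¹ * z ^ n * q) by
        rw [inv_pow]; group]
      rw [← hB, ← hA]
      group
    have h2 := hkey q hq
    have h3 : y⁻¹ * q⁻¹ * y * q = 1 := by
      rw [hydef]
      rw [show (z ^ n * (e₀ : Pbold))⁻¹ * q⁻¹ * (z ^ n * (e₀ : Pbold)) * q
          = (e₀ : Pbold)⁻¹ * ((z ^ n)⁻¹ * q⁻¹ * z ^ n * q) * (q⁻¹ * (e₀ : Pbold) * q) by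
        group]
      rw [h1, h2]
      group
    have h4 : y = q⁻¹ * y * q := by
      have h5 : y⁻¹ * (q⁻¹ * y * q) = 1 := by
        rw [show y⁻¹ * (q⁻¹ * y * q) = y⁻¹ * q⁻¹ * y * q by group, h3]
      exact (inv_mul_eq_one.mp h5)
    conv_lhs => rw [h4]
    group
  refine ⟨y, Subgroup.mem_centralizer_iff.mpr (fun q hq => hycent q hq), ?_⟩
  -- the conjugation equality
  have hmapy : Subgroup.map ρ (conjSubgroup y P₁) = Subgroup.map ρ P₂ := by
    apply le_antisymm
    · rintro x' hx'
      obtain ⟨x, hx, rfl⟩ := Subgroup.mem_map.mp hx'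
      obtain ⟨a, ha, rfl⟩ := Subgroup.mem_map.mp hx
      have h1 : ρ ((MulAut.conj y⁻¹).toMonoidHom a) = vb * ρ a * vb⁻¹ := by
        show ρ (y⁻¹ * a * y⁻¹⁻¹) = vb * ρ a * vb⁻¹
        rw [inv_inv, map_mul, map_mul, map_inv, hρy]
        group
      rw [h1]
      exact hconj12 (ρ a) (Subgroup.mem_map.mpr ⟨a, ha, rfl⟩)
    · rintro x' hx'
      obtain ⟨b, hb, rfl⟩ := Subgroup.mem_map.mp hx'
      have h1 := hconj21 (ρ b) (Subgroup.mem_map.mpr ⟨b, hb, rfl⟩)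
      obtain ⟨a, ha, ha2⟩ := Subgroup.mem_map.mp h1
      refine Subgroup.mem_map.mpr ⟨(MulAut.conj y⁻¹).toMonoidHom a, ?_, ?_⟩
      · exact Subgroup.mem_map.mpr ⟨a, ha, rfl⟩
      · show ρ (y⁻¹ * a * y⁻¹⁻¹) = ρ b
        rw [inv_inv, map_mul, map_mul, map_inv, hρy, ha2]
        group
  have hk1 : Tinf ≤ conjSubgroup y P₁ := by
    intro t ht
    refine Subgroup.mem_map.mpr ⟨y * t * y⁻¹, hT₁ (hTinfn.conj_mem t ht y), ?_⟩
    show y⁻¹ * (y * t * y⁻¹) * y⁻¹⁻¹ = t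
    group
  have hcm1 : Subgroup.comap ρ (Subgroup.map ρ (conjSubgroup y P₁)) = conjSubgroup y P₁ := by
    rw [Subgroup.comap_map_eq, hρdef, QuotientGroup.ker_mk', sup_eq_left.mpr hk1]
  have hcm2 : Subgroup.comap ρ (Subgroup.map ρ P₂) = P₂ := by
    rw [Subgroup.comap_map_eq, hρdef, QuotientGroup.ker_mk', sup_eq_left.mpr hT₂]
  rw [← hcm1, hmapy, hcm2]


end
end
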